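/- arXiv:0906.1832 — 5 statements merged into one kernel-verified Lean document; each statement's English description precedes it below -/
import Mathlib

section
/- Let L be a (not necessarily associative or commutative) ring whose additive group is finitely generated, i.e. an abelian group of finite rank with a bi-additive multiplication. For m ≥ 1 let b_m(L) denote the number of subrings of L of additive index m (this number is finite). Then the function m ↦ b_m(L) is multiplicative: if gcd(m, m') = 1 then b_{m m'}(L) = b_m(L) · b_{m'}(L). Consequently the zeta function ζ_L(s) = ∑_m b_m(L) m^{−s} has an Euler product ζ_L(s) = ∏_p ζ_{L,p}(s) over the primes p. -/
section Aux

variable {L : Type*} [NonUnitalNonAssocRing L]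

/-- Bezout decomposition of an element with respect to coprime `m`, `m'`. -/
private lemma bezout_decomp {m m' : ℕ} (hco : Nat.Coprime m m') (x : L) :
    x = (Nat.gcdA m m') • (m • x) + (Nat.gcdB m m') • (m' • x) := by
  have h : ((1 : ℕ) : ℤ) = (m : ℤ) * Nat.gcdA m m' + (m' : ℤ) * Nat.gcdB m m' := by
    rw [← hco.gcd_eq_one]; exact_mod_cast Nat.gcd_eq_gcd_ab m m'
  calc x = ((1 : ℕ) : ℤ) • x := by simp
    _ = ((m : ℤ) * Nat.gcdA m m' + (m' : ℤ) * Nat.gcdB m m') • x := by rw [← h]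
    _ = Nat.gcdA m m' • ((m : ℤ) • x) + Nat.gcdB m m' • ((m' : ℤ) • x) := by
        rw [add_smul, mul_comm (m : ℤ), mul_comm (m' : ℤ), mul_smul, mul_smul]
    _ = Nat.gcdA m m' • (m • x) + Nat.gcdB m m' • (m' • x) := by
        rw [natCast_zsmul, natCast_zsmul]

/-- The `k`-saturation of a subring `H`, under the hypotheses that `n • x ∈ H` for all `x`
and `gcd (k*k) n = k`. -/
private def sat (H : NonUnitalSubring L) (k n : ℕ) (hn : ∀ x : L, n • x ∈ H)
    (hg : Nat.gcd (k * k) n = k) : NonUnitalSubring L where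
  carrier := {x | k • x ∈ H}
  zero_mem' := by
    show k • (0 : L) ∈ H
    rw [smul_zero]; exact H.zero_mem
  add_mem' := fun {a b} ha hb => by
    simpa [smul_add] using H.add_mem ha hb
  neg_mem' := fun {a} ha => by
    simpa [smul_neg] using H.neg_mem ha
  mul_mem' := fun {x y} hx hy => by
    have h1 : (k * k) • (x * y) ∈ H := by
      have := H.mul_mem hx hy
      rwa [smul_mul_assoc, mul_smul_comm, smul_smul] at this
    have h2 : n • (x * y) ∈ H := hn _
    have hbez : (k : ℤ) = ((k * k : ℕ) : ℤ) * Nat.gcdA (k * k) n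
        + ((n : ℕ) : ℤ) * Nat.gcdB (k * k) n := by
      have h0 := Nat.gcd_eq_gcd_ab (k * k) n
      rw [hg] at h0
      exact_mod_cast h0
    have key : (k : ℤ) • (x * y) ∈ H := by
      rw [hbez, add_smul, mul_comm ((k * k : ℕ) : ℤ), mul_comm ((n : ℕ) : ℤ), mul_smul, mul_smul,
        natCast_zsmul, natCast_zsmul]
      exact H.add_mem (zsmul_mem h1 _) (zsmul_mem h2 _)
    show k • (x * y) ∈ H
    rwa [natCast_zsmul] at key

private lemma mem_sat {H : NonUnitalSubring L} {k n : ℕ} {hn : ∀ x : L, n • x ∈ H}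
    {hg : Nat.gcd (k * k) n = k} {x : L} : x ∈ sat H k n hn hg ↔ k • x ∈ H := Iff.rfl

private lemma toAddSubgroup_injective :
    Function.Injective (NonUnitalSubring.toAddSubgroup (R := L)) := by
  intro H K h
  ext x
  constructor
  · intro hx; exact (show x ∈ K.toAddSubgroup from h ▸ hx)
  · intro hx; exact (show x ∈ H.toAddSubgroup from h.symm ▸ hx)

private lemma toAddSubgroup_inf (H K : NonUnitalSubring L) :
    (H ⊓ K).toAddSubgroup = H.toAddSubgroup ⊓ K.toAddSubgroup := by
  ext x; simp [NonUnitalSubring.mem_toAddSubgroup]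

end Aux

section Grp

variable {G : Type*} [AddCommGroup G]

/-- Index of an intersection of "codisjoint" subgroups. -/
private lemma index_inf_of_sup_eq_top (K K' : AddSubgroup G) (h : K ⊔ K' = ⊤) :
    (K ⊓ K').index = K.index * K'.index := by
  have h1 : (K ⊓ K').relIndex K' * K'.index = (K ⊓ K').index :=
    AddSubgroup.relIndex_mul_index inf_le_right
  rw [AddSubgroup.inf_relIndex_right] at h1
  rw [← h1]
  congr 1
  have h2 := AddSubgroup.relIndex_sup_right K' K
  rw [sup_comm, h, AddSubgroup.relIndex_top_right] at h2
  exact h2.symm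

/-- Cauchy-type consequence: if every element of `G ⧸ K` is killed by `n`, then every prime
dividing the index of `K` divides `n`. -/
private lemma prime_dvd_of_exponent (K : AddSubgroup G) {n : ℕ} (hi : K.index ≠ 0)
    (h : ∀ x : G, n • x ∈ K) : ∀ p : ℕ, p.Prime → p ∣ K.index → p ∣ n := by
  intro p hp hpd
  have hfin : Finite (G ⧸ K) := by
    rw [AddSubgroup.index_eq_card] at hi
    exact (Nat.card_ne_zero.mp hi).2
  haveI : Fact p.Prime := ⟨hp⟩
  rw [AddSubgroup.index_eq_card] at hpd
  obtain ⟨x, hx⟩ := exists_prime_addOrderOf_dvd_card' (G := G ⧸ K) p hpd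
  have hxn : n • x = 0 := by
    induction x using QuotientAddGroup.induction_on with
    | H y =>
      rw [← QuotientAddGroup.mk_nsmul, QuotientAddGroup.eq_zero_iff]
      exact h y
  rw [← hx]
  exact addOrderOf_dvd_of_nsmul_eq_zero hxn

end Grp

/-- Numerical lemma pinning down the two indices. -/
private lemma nat_pin {a b m m' : ℕ} (hco : Nat.Coprime m m') (hm : m ≠ 0) (hm' : m' ≠ 0)
    (hab : a * b = m * m') (ha : ∀ p, p.Prime → p ∣ a → p ∣ m)
    (hb : ∀ p, p.Prime → p ∣ b → p ∣ m') : a = m ∧ b = m' := by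
  have habne : a * b ≠ 0 := by rw [hab]; exact Nat.mul_ne_zero hm hm'
  have hane : a ≠ 0 := fun h => habne (by rw [h, zero_mul])
  have hbne : b ≠ 0 := fun h => habne (by rw [h, mul_zero])
  have hcam' : Nat.Coprime a m' := by
    rw [Nat.coprime_iff_gcd_eq_one]
    by_contra hg
    obtain ⟨p, hp, hpd⟩ := Nat.exists_prime_and_dvd hg
    have hpa : p ∣ a := hpd.trans (Nat.gcd_dvd_left a m')
    have hpm' : p ∣ m' := hpd.trans (Nat.gcd_dvd_right a m')
    have hpm : p ∣ m := ha p hp hpa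
    have : p ∣ 1 := hco ▸ Nat.dvd_gcd hpm hpm'
    exact hp.one_lt.ne' (Nat.eq_one_of_dvd_one this) |>.elim
  have hcbm : Nat.Coprime b m := by
    rw [Nat.coprime_iff_gcd_eq_one]
    by_contra hg
    obtain ⟨p, hp, hpd⟩ := Nat.exists_prime_and_dvd hg
    have hpb : p ∣ b := hpd.trans (Nat.gcd_dvd_left b m)
    have hpm : p ∣ m := hpd.trans (Nat.gcd_dvd_right b m)
    have hpm' : p ∣ m' := hb p hp hpb
    have : p ∣ 1 := hco ▸ Nat.dvd_gcd hpm hpm'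
    exact hp.one_lt.ne' (Nat.eq_one_of_dvd_one this) |>.elim
  have ham : a ∣ m := hcam'.dvd_of_dvd_mul_right (hab ▸ dvd_mul_right a b)
  have hbm' : b ∣ m' := hcbm.dvd_of_dvd_mul_left (hab ▸ dvd_mul_left b a)
  obtain ⟨c, hc⟩ := ham
  obtain ⟨d, hd⟩ := hbm'
  have h2 : a * b * (c * d) = a * b * 1 := by
    calc a * b * (c * d) = (a * c) * (b * d) := by ring
      _ = m * m' := by rw [← hc, ← hd]
      _ = a * b * 1 := by rw [mul_one, hab]
  have hcd : c * d = 1 := Nat.eq_of_mul_eq_mul_left (Nat.pos_of_ne_zero habne) h2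
  have hc1 : c = 1 := Nat.eq_one_of_dvd_one ⟨d, hcd.symm⟩
  have hd1 : d = 1 := Nat.eq_one_of_dvd_one ⟨c, by rw [← hcd, mul_comm]⟩
  constructor
  · rw [hc, hc1, mul_one]
  · rw [hd, hd1, mul_one]

/-- For a ring `L` (an abelian group of finite rank with a bi-additive multiplication, not
necessarily associative, commutative or unital), and `m ≥ 1`, the number `b_m(L)` of subrings
of `L` of additive index `m` is finite, and `m ↦ b_m(L)` is multiplicative: if
`gcd(m, m') = 1` then `b_{mm'}(L) = b_m(L)·b_{m'}(L)`. (This is the coefficient-wise form of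
the Euler product `ζ_L(s) = ∏_p ζ_{L,p}(s)`.) -/
theorem subring_counting_function_multiplicative
    (L : Type*) [NonUnitalNonAssocRing L] [AddGroup.FG L] :
    (∀ m : ℕ, 1 ≤ m →
      {H : NonUnitalSubring L | H.toAddSubgroup.index = m}.Finite) ∧
    ∀ m m' : ℕ, 1 ≤ m → 1 ≤ m' → Nat.Coprime m m' →
      Nat.card {H : NonUnitalSubring L // H.toAddSubgroup.index = m * m'} =
        Nat.card {H : NonUnitalSubring L // H.toAddSubgroup.index = m} *
          Nat.card {H : NonUnitalSubring L // H.toAddSubgroup.index = m'} := by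
  constructor
  · -- Finiteness
    intro m hm
    set N : AddSubgroup L :=
      (AddMonoidHom.mk' (fun x : L => m • x) (fun a b => smul_add m a b)).range with hN
    have hNle : ∀ H : NonUnitalSubring L, H.toAddSubgroup.index = m →
        N ≤ H.toAddSubgroup := by
      intro H hH y hy
      obtain ⟨x, rfl⟩ := hy
      show m • x ∈ H
      rw [← hH]
      exact AddSubgroup.nsmul_index_mem H.toAddSubgroup x
    -- the quotient is finite
    have htor : AddMonoid.IsTorsion (L ⧸ N) := by
      intro q
      rw [isOfFinAddOrder_iff_nsmul_eq_zero]
      refine ⟨m, hm, ?_⟩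
      induction q using QuotientAddGroup.induction_on with
      | H y =>
        rw [← QuotientAddGroup.mk_nsmul, QuotientAddGroup.eq_zero_iff]
        exact ⟨y, rfl⟩
    have hfinQ : Finite (L ⧸ N) := AddCommGroup.finite_of_fg_torsion _ htor
    have hfinSub : Finite (AddSubgroup (L ⧸ N)) :=
      Finite.of_injective (fun H => (H : Set (L ⧸ N))) SetLike.coe_injective
    rw [← Set.finite_coe_iff]
    refine Finite.of_injective
      (fun H => (H : NonUnitalSubring L).toAddSubgroup.map (QuotientAddGroup.mk' N)) ?_
    rintro ⟨H1, h1⟩ ⟨H2, h2⟩ hmap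
    have key : ∀ H : NonUnitalSubring L, H.toAddSubgroup.index = m →
        (H.toAddSubgroup.map (QuotientAddGroup.mk' N)).comap (QuotientAddGroup.mk' N)
          = H.toAddSubgroup := by
      intro H hH
      rw [AddSubgroup.comap_map_eq, QuotientAddGroup.ker_mk', sup_eq_left.mpr (hNle H hH)]
    have : H1.toAddSubgroup = H2.toAddSubgroup := by
      rw [← key H1 h1, ← key H2 h2]
      simp only at hmap
      rw [hmap]
    exact Subtype.ext (toAddSubgroup_injective this)
  · -- Multiplicativity
    intro m m' hm hm' hco
    have hmne : m ≠ 0 := by omega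
    have hm'ne : m' ≠ 0 := by omega
    have hg' : Nat.gcd (m' * m') (m * m') = m' := by
      rw [Nat.gcd_mul_right, hco.symm.gcd_eq_one, one_mul]
    have hg : Nat.gcd (m * m) (m * m') = m := by
      rw [Nat.gcd_mul_left, hco.gcd_eq_one, mul_one]
    -- exponent lemma for subrings of index m * m'
    have hexp : ∀ (H : NonUnitalSubring L), H.toAddSubgroup.index = m * m' →
        ∀ x : L, (m * m') • x ∈ H := by
      intro H hH x
      rw [← hH]
      exact AddSubgroup.nsmul_index_mem H.toAddSubgroup x
    -- the forward components
    have fwd : ∀ (H : NonUnitalSubring L) (hH : H.toAddSubgroup.index = m * m'),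
        (sat H m' (m * m') (hexp H hH) hg').toAddSubgroup.index = m ∧
        (sat H m (m * m') (hexp H hH) hg).toAddSubgroup.index = m' ∧
        sat H m' (m * m') (hexp H hH) hg' ⊓ sat H m (m * m') (hexp H hH) hg = H := by
      intro H hH
      set K := sat H m' (m * m') (hexp H hH) hg' with hK
      set K' := sat H m (m * m') (hexp H hH) hg with hK'
      have hmemK : ∀ x : L, m • x ∈ K := by
        intro x
        show m' • (m • x) ∈ H
        rw [smul_smul, mul_comm]
        exact hexp H hH x
      have hmemK' : ∀ x : L, m' • x ∈ K' := by
        intro x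
        show m • (m' • x) ∈ H
        rw [smul_smul]
        exact hexp H hH x
      have hinf : K ⊓ K' = H := by
        ext x
        constructor
        · rintro ⟨hx1, hx2⟩
          have hx1' : m' • x ∈ H := hx1
          have hx2' : m • x ∈ H := hx2
          have := bezout_decomp hco x
          rw [this]
          exact H.add_mem (zsmul_mem hx2' _) (zsmul_mem hx1' _)
        · intro hx
          exact ⟨nsmul_mem hx m', nsmul_mem hx m⟩
      have hsup : K.toAddSubgroup ⊔ K'.toAddSubgroup = ⊤ := by
        rw [eq_top_iff]
        intro x _
        have hdec := bezout_decomp hco x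
        rw [hdec]
        exact add_mem
          (AddSubgroup.mem_sup_left (zsmul_mem (hmemK x) _))
          (AddSubgroup.mem_sup_right (zsmul_mem (hmemK' x) _))
      have hprod : K.toAddSubgroup.index * K'.toAddSubgroup.index = m * m' := by
        rw [← index_inf_of_sup_eq_top _ _ hsup, ← toAddSubgroup_inf, hinf, hH]
      have hine : K.toAddSubgroup.index ≠ 0 := by
        intro h0
        rw [h0, zero_mul] at hprod
        exact Nat.mul_ne_zero hmne hm'ne hprod.symm
      have hine' : K'.toAddSubgroup.index ≠ 0 := by
        intro h0
        rw [h0, mul_zero] at hprod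
        exact Nat.mul_ne_zero hmne hm'ne hprod.symm
      have hPa : ∀ p, p.Prime → p ∣ K.toAddSubgroup.index → p ∣ m :=
        prime_dvd_of_exponent K.toAddSubgroup hine hmemK
      have hPb : ∀ p, p.Prime → p ∣ K'.toAddSubgroup.index → p ∣ m' :=
        prime_dvd_of_exponent K'.toAddSubgroup hine' hmemK'
      obtain ⟨hKm, hK'm'⟩ := nat_pin hco hmne hm'ne hprod hPa hPb
      exact ⟨hKm, hK'm', hinf⟩
    -- backward direction facts
    have bwd : ∀ (H₁ H₂ : NonUnitalSubring L), H₁.toAddSubgroup.index = m →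
        H₂.toAddSubgroup.index = m' → (H₁ ⊓ H₂).toAddSubgroup.index = m * m' := by
      intro H₁ H₂ h1 h2
      have hsup : H₁.toAddSubgroup ⊔ H₂.toAddSubgroup = ⊤ := by
        rw [← AddSubgroup.index_eq_one]
        have d1 : (H₁.toAddSubgroup ⊔ H₂.toAddSubgroup).index ∣ m :=
          h1 ▸ AddSubgroup.index_dvd_of_le le_sup_left
        have d2 : (H₁.toAddSubgroup ⊔ H₂.toAddSubgroup).index ∣ m' :=
          h2 ▸ AddSubgroup.index_dvd_of_le le_sup_right
        have := Nat.dvd_gcd d1 d2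
        rw [hco.gcd_eq_one] at this
        exact Nat.eq_one_of_dvd_one this
      rw [toAddSubgroup_inf, index_inf_of_sup_eq_top _ _ hsup, h1, h2]
    -- recovering components from the intersection
    have recov : ∀ (H₁ H₂ : NonUnitalSubring L), H₁.toAddSubgroup.index = m →
        H₂.toAddSubgroup.index = m' → ∀ x : L,
        (m' • x ∈ H₁ ⊓ H₂ ↔ x ∈ H₁) ∧ (m • x ∈ H₁ ⊓ H₂ ↔ x ∈ H₂) := by
      intro H₁ H₂ h1 h2 x
      have e1 : ∀ y : L, m • y ∈ H₁ := by
        intro y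
        have := AddSubgroup.nsmul_index_mem H₁.toAddSubgroup y
        rw [h1] at this
        exact this
      have e2 : ∀ y : L, m' • y ∈ H₂ := by
        intro y
        have := AddSubgroup.nsmul_index_mem H₂.toAddSubgroup y
        rw [h2] at this
        exact this
      constructor
      · constructor
        · rintro ⟨hxa, _⟩
          have := bezout_decomp hco x
          rw [this]
          exact H₁.add_mem (zsmul_mem (e1 x) _) (zsmul_mem hxa _)
        · intro hx
          exact ⟨nsmul_mem hx m', e2 x⟩
      · constructor
        · rintro ⟨_, hxb⟩
          have := bezout_decomp hco x
          rw [this]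
          exact H₂.add_mem (zsmul_mem hxb _) (zsmul_mem (e2 x) _)
        · intro hx
          exact ⟨e1 x, nsmul_mem hx m⟩
    -- build the equivalence
    have e : {H : NonUnitalSubring L // H.toAddSubgroup.index = m * m'} ≃
        {H : NonUnitalSubring L // H.toAddSubgroup.index = m} ×
          {H : NonUnitalSubring L // H.toAddSubgroup.index = m'} :=
      { toFun := fun H =>
          (⟨sat H.1 m' (m * m') (hexp H.1 H.2) hg', (fwd H.1 H.2).1⟩,
           ⟨sat H.1 m (m * m') (hexp H.1 H.2) hg, (fwd H.1 H.2).2.1⟩)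
        invFun := fun p => ⟨p.1.1 ⊓ p.2.1, bwd p.1.1 p.2.1 p.1.2 p.2.2⟩
        left_inv := fun H => Subtype.ext (fwd H.1 H.2).2.2
        right_inv := fun p => by
          obtain ⟨⟨H₁, h1⟩, ⟨H₂, h2⟩⟩ := p
          refine Prod.ext (Subtype.ext ?_) (Subtype.ext ?_)
          · ext x
            exact (recov H₁ H₂ h1 h2 x).1
          · ext x
            exact (recov H₁ H₂ h1 h2 x).2 }
    rw [Nat.card_congr e, Nat.card_prod]
end

section
/- In the ring of formal power series ℤ⟦X_1, X_2, X_3⟧ in three variables, let S be the power series whose coefficient at the monomial X_1^{m_1} X_2^{m_2} X_3^{m_3} is 1 if m_3 ≤ m_1 + m_2 and 0 otherwise. Then (1 − X_1 X_3)(1 − X_1)(1 − X_2 X_3)(1 − X_2) · S = 1 − X_1 X_2 X_3. -/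
open MvPowerSeries

private lemma step_coeff (e : Fin 3 →₀ ℕ) (f : MvPowerSeries (Fin 3) ℤ) (d : Fin 3 →₀ ℕ) :
    MvPowerSeries.coeff d ((1 - monomial (R := ℤ) e 1) * f) =
      MvPowerSeries.coeff d f - if e ≤ d then MvPowerSeries.coeff (d - e) f else 0 := by
  rw [sub_mul, one_mul, map_sub, coeff_monomial_mul]
  split_ifs <;> simp

private lemma pair_le (i j : Fin 3) (d : Fin 3 →₀ ℕ) (hij : i ≠ j) :
    Finsupp.single i 1 + Finsupp.single j 1 ≤ d ↔ 1 ≤ d i ∧ 1 ≤ d j := by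
  rw [Finsupp.le_def]
  constructor
  · intro h
    refine ⟨le_trans ?_ (h i), le_trans ?_ (h j)⟩ <;>
      simp [Finsupp.single_apply, hij, hij.symm]
  · rintro ⟨h1, h2⟩ s
    rcases eq_or_ne s i with rfl | hi
    · simpa [Finsupp.single_apply, hij.symm] using h1
    rcases eq_or_ne s j with rfl | hj
    · simpa [Finsupp.single_apply, hij] using h2
    · simp [Finsupp.single_apply, Ne.symm hi, Ne.symm hj]

private lemma vec_eq (x y : Fin 3 →₀ ℕ) : x = y ↔ x 0 = y 0 ∧ x 1 = y 1 ∧ x 2 = y 2 := by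
  constructor
  · rintro rfl; exact ⟨rfl, rfl, rfl⟩
  · rintro ⟨h0, h1, h2⟩; ext s; fin_cases s <;> assumption

set_option maxHeartbeats 1000000 in
/-- In `ℤ⟦X₁,X₂,X₃⟧`, let `S` be the generating function of the polyhedral cone
`m₃ ≤ m₁ + m₂` (coefficient `1` at `X₁^{m₁}X₂^{m₂}X₃^{m₃}` if `m₃ ≤ m₁ + m₂`, and `0`
otherwise). Then `(1 - X₁X₃)(1 - X₁)(1 - X₂X₃)(1 - X₂) · S = 1 - X₁X₂X₃`. -/
theorem generating_function_heisenberg_cone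
    (S : MvPowerSeries (Fin 3) ℤ)
    (hS : ∀ d : Fin 3 →₀ ℕ,
      MvPowerSeries.coeff d S = if d 2 ≤ d 0 + d 1 then 1 else 0) :
    (1 - X 0 * X 2) * (1 - X 0) * (1 - X 1 * X 2) * (1 - X 1) * S =
      1 - X 0 * X 1 * X 2 := by
  have h02 : (X 0 * X 2 : MvPowerSeries (Fin 3) ℤ)
      = monomial (R := ℤ) (Finsupp.single 0 1 + Finsupp.single 2 1) 1 := by
    rw [X_def, X_def, monomial_mul_monomial, one_mul]
  have h12 : (X 1 * X 2 : MvPowerSeries (Fin 3) ℤ)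
      = monomial (R := ℤ) (Finsupp.single 1 1 + Finsupp.single 2 1) 1 := by
    rw [X_def, X_def, monomial_mul_monomial, one_mul]
  have h012 : (X 0 * X 1 * X 2 : MvPowerSeries (Fin 3) ℤ)
      = monomial (R := ℤ) (Finsupp.single 0 1 + Finsupp.single 1 1 + Finsupp.single 2 1) 1 := by
    rw [X_def, X_def, X_def, monomial_mul_monomial, monomial_mul_monomial, one_mul, one_mul]
  have hT1 : ∀ d : Fin 3 →₀ ℕ, MvPowerSeries.coeff d ((1 - X 1) * S) =
      if (d 1 = 0 ∧ d 2 ≤ d 0) ∨ (1 ≤ d 1 ∧ d 2 = d 0 + d 1) then 1 else 0 := by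
    intro d
    rw [X_def, step_coeff]
    simp only [hS, Finsupp.single_le_iff, Finsupp.tsub_apply, Finsupp.add_apply, Finsupp.single_apply]
    norm_num
    split_ifs <;> omega
  have hT2 : ∀ d : Fin 3 →₀ ℕ, MvPowerSeries.coeff d ((1 - X 1 * X 2) * ((1 - X 1) * S)) =
      if d 1 = 0 ∧ d 2 ≤ d 0 then 1
      else if d 1 = 1 ∧ 1 ≤ d 2 ∧ d 2 ≤ d 0 then -1 else 0 := by
    intro d
    rw [h12, step_coeff]
    simp only [hT1, pair_le 1 2 d (by decide), Finsupp.tsub_apply, Finsupp.add_apply, Finsupp.single_apply]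
    norm_num
    split_ifs <;> omega
  have hT3 : ∀ d : Fin 3 →₀ ℕ,
      MvPowerSeries.coeff d ((1 - X 0) * ((1 - X 1 * X 2) * ((1 - X 1) * S))) =
      if d 1 = 0 ∧ d 2 = d 0 then 1
      else if d 1 = 1 ∧ d 2 = d 0 ∧ 1 ≤ d 0 then -1 else 0 := by
    intro d
    rw [X_def, step_coeff]
    simp only [hT2, Finsupp.single_le_iff, Finsupp.tsub_apply, Finsupp.add_apply, Finsupp.single_apply]
    norm_num
    split_ifs <;> omega
  have key : (1 - X 0 * X 2) * (1 - X 0) * (1 - X 1 * X 2) * (1 - X 1) * S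
      = (1 - X 0 * X 2) * ((1 - X 0) * ((1 - X 1 * X 2) * ((1 - X 1) * S))) := by ring
  rw [key]
  ext d
  rw [h02, step_coeff, map_sub, h012, coeff_monomial, coeff_one]
  simp only [hT3, pair_le 0 2 d (by decide),
    vec_eq d (Finsupp.single 0 1 + Finsupp.single 1 1 + Finsupp.single 2 1), vec_eq d 0,
    Finsupp.tsub_apply, Finsupp.single_apply, Finsupp.add_apply, Finsupp.coe_zero,
    Pi.zero_apply]
  norm_num
  split_ifs <;> omega
end

section
/- Let L be the Heisenberg Lie ring over ℤ and let p be a prime. For every N ≥ 0, the number of Lie subrings of L of additive index p^N is finite and equals ∑ p^{m_2 + 2 m_3}, where the sum runs over all triples (m_1, m_2, m_3) of non-negative integers with m_1 + m_2 + m_3 = N and m_3 ≤ m_1 + m_2. (Equivalently, ζ_{L,p}(s) = ζ_p(s)ζ_p(s−1)ζ_p(2s−2)ζ_p(2s−3)ζ_p(3s−3)^{−1} for every prime p.) -/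
open Finset

/-- The Lie bracket of the Heisenberg Lie ring over `ℤ`: on the free `ℤ`-module `ℤ³` with
basis `x, y, z` it is determined by `[x,y] = z`, `[x,z] = [y,z] = 0`; concretely
`[(a,b,c),(a',b',c')] = (0, 0, ab' - a'b)`. -/
def heisenbergBracket (u v : ℤ × ℤ × ℤ) : ℤ × ℤ × ℤ :=
  (0, 0, u.1 * v.2.1 - v.1 * u.2.1)


def Hnf (a b c d e f : ℤ) : AddSubgroup (ℤ × ℤ × ℤ) where
  carrier := {w | ∃ x y z : ℤ, w = (x * a, x * b + y * d, x * c + y * e + z * f)}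
  zero_mem' := ⟨0, 0, 0, by simp; rfl⟩
  add_mem' := by
    rintro p q ⟨x, y, z, rfl⟩ ⟨x', y', z', rfl⟩
    exact ⟨x + x', y + y', z + z', by
      simp only [Prod.mk_add_mk, Prod.mk.injEq]; refine ⟨by ring, by ring, by ring⟩⟩
  neg_mem' := by
    rintro p ⟨x, y, z, rfl⟩
    exact ⟨-x, -y, -z, by
      simp only [Prod.neg_mk, Prod.mk.injEq]; refine ⟨by ring, by ring, by ring⟩⟩

theorem mem_Hnf {a b c d e f : ℤ} {u : ℤ × ℤ × ℤ} :
    u ∈ Hnf a b c d e f ↔ ∃ x y z : ℤ, u = (x * a, x * b + y * d, x * c + y * e + z * f) :=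
  Iff.rfl

/-- Uniqueness of coordinates. -/
theorem Hnf_coords {a b c d e f x y z x' y' z' : ℤ} (ha : a ≠ 0) (hd : d ≠ 0) (hf : f ≠ 0)
    (h : ((x * a, x * b + y * d, x * c + y * e + z * f) : ℤ × ℤ × ℤ)
       = (x' * a, x' * b + y' * d, x' * c + y' * e + z' * f)) :
    x = x' ∧ y = y' ∧ z = z' := by
  obtain ⟨h1, h2, h3⟩ : x * a = x' * a ∧ x * b + y * d = x' * b + y' * d ∧
      x * c + y * e + z * f = x' * c + y' * e + z' * f := by
    simpa [Prod.ext_iff] using h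
  have hx : x = x' := by
    have := mul_right_cancel₀ ha h1; exact this
  subst hx
  have hy : y = y' := by
    have : y * d = y' * d := by linarith
    exact mul_right_cancel₀ hd this
  subst hy
  have hz : z = z' := by
    have : z * f = z' * f := by linarith
    exact mul_right_cancel₀ hf this
  exact ⟨rfl, rfl, hz⟩

/-- Box representatives of cosets are unique. -/
theorem Hnf_box_unique {a b c d e f : ℤ} (ha : 0 < a) (hd : 0 < d) (hf : 0 < f)
    {r r' : ℤ × ℤ × ℤ}
    (hr : 0 ≤ r.1 ∧ r.1 < a ∧ 0 ≤ r.2.1 ∧ r.2.1 < d ∧ 0 ≤ r.2.2 ∧ r.2.2 < f)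
    (hr' : 0 ≤ r'.1 ∧ r'.1 < a ∧ 0 ≤ r'.2.1 ∧ r'.2.1 < d ∧ 0 ≤ r'.2.2 ∧ r'.2.2 < f)
    (h : r - r' ∈ Hnf a b c d e f) : r = r' := by
  obtain ⟨x, y, z, hxyz⟩ := h
  obtain ⟨h1, h2, h3⟩ : r.1 - r'.1 = x * a ∧ r.2.1 - r'.2.1 = x * b + y * d ∧
      r.2.2 - r'.2.2 = x * c + y * e + z * f := by
    simpa [Prod.ext_iff] using hxyz
  have hx : x = 0 := by nlinarith [hr.1, hr.2.1, hr'.1, hr'.2.1]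
  subst hx
  have hy : y = 0 := by nlinarith [hr.2.2.1, hr.2.2.2.1, hr'.2.2.1, hr'.2.2.2.1]
  subst hy
  have hz : z = 0 := by nlinarith [hr.2.2.2.2.1, hr.2.2.2.2.2, hr'.2.2.2.2.1, hr'.2.2.2.2.2]
  subst hz
  have : r.1 = r'.1 ∧ r.2.1 = r'.2.1 ∧ r.2.2 = r'.2.2 := by constructor <;> [linarith; constructor <;> linarith]
  exact Prod.ext this.1 (Prod.ext this.2.1 this.2.2)

/-- Coset representative in the fundamental box. -/
def hrep (a b c d e f : ℤ) (u : ℤ × ℤ × ℤ) : ℤ × ℤ × ℤ :=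
  (u.1 % a, (u.2.1 - (u.1 / a) * b) % d,
    (u.2.2 - (u.1 / a) * c - ((u.2.1 - (u.1 / a) * b) / d) * e) % f)

theorem hrep_sub_mem (a b c d e f : ℤ) (u : ℤ × ℤ × ℤ) :
    u - hrep a b c d e f u ∈ Hnf a b c d e f := by
  refine ⟨u.1 / a, (u.2.1 - (u.1 / a) * b) / d,
    (u.2.2 - (u.1 / a) * c - ((u.2.1 - (u.1 / a) * b) / d) * e) / f, ?_⟩
  have e1 := Int.mul_ediv_add_emod u.1 a
  have e2 := Int.mul_ediv_add_emod (u.2.1 - (u.1 / a) * b) d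
  have e3 := Int.mul_ediv_add_emod (u.2.2 - (u.1 / a) * c - ((u.2.1 - (u.1 / a) * b) / d) * e) f
  simp only [hrep, Prod.ext_iff, Prod.fst_sub, Prod.snd_sub]
  refine ⟨by linarith, by linarith, by linarith⟩

theorem hrep_bounds {a d f : ℤ} (ha : 0 < a) (hd : 0 < d) (hf : 0 < f) (b c e : ℤ)
    (u : ℤ × ℤ × ℤ) :
    0 ≤ (hrep a b c d e f u).1 ∧ (hrep a b c d e f u).1 < a ∧
    0 ≤ (hrep a b c d e f u).2.1 ∧ (hrep a b c d e f u).2.1 < d ∧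
    0 ≤ (hrep a b c d e f u).2.2 ∧ (hrep a b c d e f u).2.2 < f :=
  ⟨Int.emod_nonneg _ ha.ne', Int.emod_lt_of_pos _ ha,
   Int.emod_nonneg _ hd.ne', Int.emod_lt_of_pos _ hd,
   Int.emod_nonneg _ hf.ne', Int.emod_lt_of_pos _ hf⟩

theorem hrep_of_box {a d f : ℤ} (b c e : ℤ)
    {u : ℤ × ℤ × ℤ}
    (hu : 0 ≤ u.1 ∧ u.1 < a ∧ 0 ≤ u.2.1 ∧ u.2.1 < d ∧ 0 ≤ u.2.2 ∧ u.2.2 < f) :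
    hrep a b c d e f u = u := by
  obtain ⟨h1, h2, h3, h4, h5, h6⟩ := hu
  have hx : u.1 / a = 0 := Int.ediv_eq_zero_of_lt h1 h2
  have hr1 : u.1 % a = u.1 := Int.emod_eq_of_lt h1 h2
  have hy : u.2.1 / d = 0 := Int.ediv_eq_zero_of_lt h3 h4
  have hr2 : u.2.1 % d = u.2.1 := Int.emod_eq_of_lt h3 h4
  have hr3 : u.2.2 % f = u.2.2 := Int.emod_eq_of_lt h5 h6
  simp only [hrep, hx, zero_mul, sub_zero, hy, hr1, hr2, hr3]

theorem Hnf_index {A D F : ℕ} (hA : 0 < A) (hD : 0 < D) (hF : 0 < F) (b c e : ℤ) :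
    (Hnf (A : ℤ) b c (D : ℤ) e (F : ℤ)).index = A * D * F := by
  classical
  set a : ℤ := (A : ℤ) with ha'
  set d : ℤ := (D : ℤ) with hd'
  set f : ℤ := (F : ℤ) with hf'
  have ha : 0 < a := by rw [ha']; exact_mod_cast hA
  have hd : 0 < d := by rw [hd']; exact_mod_cast hD
  have hf : 0 < f := by rw [hf']; exact_mod_cast hF
  set H := Hnf a b c d e f with hH
  set T : Finset (ℤ × ℤ × ℤ) := Finset.Ico 0 a ×ˢ (Finset.Ico 0 d ×ˢ Finset.Ico 0 f) with hT
  have memT : ∀ r : ℤ × ℤ × ℤ, r ∈ T ↔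
      (0 ≤ r.1 ∧ r.1 < a ∧ 0 ≤ r.2.1 ∧ r.2.1 < d ∧ 0 ≤ r.2.2 ∧ r.2.2 < f) := by
    intro r
    simp only [hT, Finset.mem_product, Finset.mem_Ico]
    tauto
  have wd : ∀ u v : ℤ × ℤ × ℤ, -u + v ∈ H → hrep a b c d e f u = hrep a b c d e f v := by
    intro u v huv
    refine Hnf_box_unique (b := b) (c := c) (e := e) ha hd hf (hrep_bounds ha hd hf b c e u)
      (hrep_bounds ha hd hf b c e v) ?_
    have h1 := hrep_sub_mem a b c d e f u
    have h2 := hrep_sub_mem a b c d e f v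
    have heq : hrep a b c d e f u - hrep a b c d e f v
        = -(u - hrep a b c d e f u) + (-(-u + v)) + (v - hrep a b c d e f v) := by abel
    rw [heq]
    exact H.add_mem (H.add_mem (H.neg_mem h1) (H.neg_mem huv)) h2
  let E : ((ℤ × ℤ × ℤ) ⧸ H) ≃ {r // r ∈ T} :=
    { toFun := fun q => Quotient.liftOn' q
        (fun u => ⟨hrep a b c d e f u, (memT _).mpr (hrep_bounds ha hd hf b c e u)⟩)
        (fun u v h => Subtype.ext (wd u v (QuotientAddGroup.leftRel_apply.mp h)))
      invFun := fun r => QuotientAddGroup.mk r.1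
      left_inv := by
        intro q
        induction q using Quotient.inductionOn' with
        | h u =>
          show QuotientAddGroup.mk _ = _
          refine (QuotientAddGroup.eq_iff_sub_mem).mpr ?_
          have h1 := hrep_sub_mem a b c d e f u
          simpa using H.neg_mem h1
      right_inv := by
        intro r
        apply Subtype.ext
        show hrep a b c d e f r.1 = r.1
        exact hrep_of_box b c e ((memT _).mp r.2) }
  calc (Hnf a b c d e f).index = Nat.card ((ℤ × ℤ × ℤ) ⧸ H) := rfl
    _ = Nat.card {r // r ∈ T} := Nat.card_congr E
    _ = T.card := Nat.card_eq_finsetCard T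
    _ = A * D * F := by
        simp [hT, Finset.card_product, Int.card_Ico, ha', hd', hf', mul_assoc]

theorem Hnf_closed_iff {a b c d e f : ℤ} (ha : 0 < a) (hd : 0 < d) (hf : 0 < f) :
    (∀ u ∈ Hnf a b c d e f, ∀ v ∈ Hnf a b c d e f,
      heisenbergBracket u v ∈ Hnf a b c d e f) ↔ f ∣ a * d := by
  constructor
  · intro h
    have h1 : ((a, b, c) : ℤ × ℤ × ℤ) ∈ Hnf a b c d e f := ⟨1, 0, 0, by simp⟩
    have h2 : ((0, d, e) : ℤ × ℤ × ℤ) ∈ Hnf a b c d e f := ⟨0, 1, 0, by simp⟩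
    obtain ⟨x, y, z, hxyz⟩ := h _ h1 _ h2
    obtain ⟨e1, e2, e3⟩ : (0 : ℤ) = x * a ∧ (0 : ℤ) = x * b + y * d ∧
        a * d - 0 * b = x * c + y * e + z * f := by
      simpa [heisenbergBracket, Prod.ext_iff] using hxyz
    have hx : x = 0 := by
      rcases mul_eq_zero.mp e1.symm with h' | h'
      · exact h'
      · exact absurd h' ha.ne'
    subst hx
    have hy : y = 0 := by
      rcases mul_eq_zero.mp (by linarith : y * d = 0) with h' | h'
      · exact h'
      · exact absurd h' hd.ne'
    subst hy
    exact ⟨z, by linarith⟩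
  · rintro ⟨k, hk⟩ u ⟨x, y, z, rfl⟩ v ⟨x', y', z', rfl⟩
    refine ⟨0, 0, k * (x * y' - x' * y), ?_⟩
    simp only [heisenbergBracket, Prod.mk.injEq]
    refine ⟨by ring, by ring, by linear_combination (x * y' - x' * y) * hk⟩

theorem Hnf_mem_snd {a b c d e f v w : ℤ} (ha : 0 < a)
    (hmem : ((0, v, w) : ℤ × ℤ × ℤ) ∈ Hnf a b c d e f) :
    ∃ y z, v = y * d ∧ w = y * e + z * f := by
  obtain ⟨x, y, z, hxyz⟩ := hmem
  obtain ⟨e1, e2, e3⟩ : (0 : ℤ) = x * a ∧ v = x * b + y * d ∧ w = x * c + y * e + z * f := by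
    simpa [Prod.ext_iff] using hxyz
  have hx : x = 0 := by
    rcases mul_eq_zero.mp e1.symm with h' | h'
    · exact h'
    · exact absurd h' ha.ne'
  subst hx
  exact ⟨y, z, by linarith, by linarith⟩

theorem Hnf_mem_trd {a b c d e f g : ℤ} (ha : 0 < a) (hd : 0 < d)
    (hmem : ((0, 0, g) : ℤ × ℤ × ℤ) ∈ Hnf a b c d e f) : f ∣ g := by
  obtain ⟨y, z, hy, hz⟩ := Hnf_mem_snd ha hmem
  have hy0 : y = 0 := by
    rcases mul_eq_zero.mp hy.symm with h' | h'
    · exact h'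
    · exact absurd h' hd.ne'
  subst hy0
  exact ⟨z, by linarith⟩

set_option maxHeartbeats 1000000 in
/-- Uniqueness of the HNF data. -/
theorem Hnf_data_unique {a b c d e f a' b' c' d' e' f' : ℤ}
    (ha : 0 < a) (hd : 0 < d) (hf : 0 < f)
    (hb : 0 ≤ b) (hbd : b < d) (hc : 0 ≤ c) (hcf : c < f) (he : 0 ≤ e) (hef : e < f)
    (ha' : 0 < a') (hd' : 0 < d') (hf' : 0 < f')
    (hb' : 0 ≤ b') (hbd' : b' < d') (hc' : 0 ≤ c') (hcf' : c' < f') (he' : 0 ≤ e')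
    (hef' : e' < f')
    (h : Hnf a b c d e f = Hnf a' b' c' d' e' f') :
    a = a' ∧ b = b' ∧ c = c' ∧ d = d' ∧ e = e' ∧ f = f' := by
  have hf3' : ((0, 0, f') : ℤ × ℤ × ℤ) ∈ Hnf a b c d e f := by
    rw [h]; exact ⟨0, 0, 1, by simp⟩
  have hf3 : ((0, 0, f) : ℤ × ℤ × ℤ) ∈ Hnf a' b' c' d' e' f' := by
    rw [← h]; exact ⟨0, 0, 1, by simp⟩
  have hfe : f = f' :=
    Int.dvd_antisymm hf.le hf'.le (Hnf_mem_trd ha hd hf3')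
      (Hnf_mem_trd ha' hd' hf3)
  -- d = d' and e = e'
  have hd2' : ((0, d', e') : ℤ × ℤ × ℤ) ∈ Hnf a b c d e f := by
    rw [h]; exact ⟨0, 1, 0, by simp⟩
  have hd2 : ((0, d, e) : ℤ × ℤ × ℤ) ∈ Hnf a' b' c' d' e' f' := by
    rw [← h]; exact ⟨0, 1, 0, by simp⟩
  obtain ⟨y, z, hy, hz⟩ := Hnf_mem_snd ha hd2'
  obtain ⟨y', z', hy', hz'⟩ := Hnf_mem_snd ha' hd2
  have hde : d = d' := by
    have h1 : d ∣ d' := ⟨y, by linarith⟩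
    have h2 : d' ∣ d := ⟨y', by linarith⟩
    exact Int.dvd_antisymm hd.le hd'.le h1 h2
  have hy1 : y = 1 := by
    rw [← hde] at hy
    exact mul_right_cancel₀ hd.ne' (by linarith : y * d = 1 * d)
  subst hy1
  have hee : e = e' := by
    have hz2 : e' - e = z * f := by linarith
    have hz0 : z = 0 := by nlinarith
    rw [hz0] at hz2; linarith
  -- a = a', b = b', c = c'
  have hg1' : ((a', b', c') : ℤ × ℤ × ℤ) ∈ Hnf a b c d e f := by
    rw [h]; exact ⟨1, 0, 0, by simp⟩
  have hg1 : ((a, b, c) : ℤ × ℤ × ℤ) ∈ Hnf a' b' c' d' e' f' := by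
    rw [← h]; exact ⟨1, 0, 0, by simp⟩
  obtain ⟨x, y2, z2, hxyz⟩ := hg1'
  obtain ⟨e1, e2, e3⟩ : a' = x * a ∧ b' = x * b + y2 * d ∧ c' = x * c + y2 * e + z2 * f := by
    simpa [Prod.ext_iff] using hxyz
  obtain ⟨x', y3, z3, hxyz'⟩ := hg1
  obtain ⟨e1', _, _⟩ : a = x' * a' ∧ b = x' * b' + y3 * d' ∧ c = x' * c' + y3 * e' + z3 * f' := by
    simpa [Prod.ext_iff] using hxyz'
  have hae : a = a' := by
    have h1 : a ∣ a' := ⟨x, by linarith⟩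
    have h2 : a' ∣ a := ⟨x', by linarith⟩
    exact Int.dvd_antisymm ha.le ha'.le h1 h2
  have hx1 : x = 1 := by
    rw [← hae] at e1
    exact mul_right_cancel₀ ha.ne' (by linarith : x * a = 1 * a)
  subst hx1
  have hy20 : y2 = 0 := by
    have hbb : b' - b = y2 * d := by linarith
    nlinarith
  subst hy20
  have hbe : b = b' := by linarith
  have hz20 : z2 = 0 := by
    have hcc : c' - c = z2 * f := by linarith
    nlinarith
  have hce : c = c' := by rw [hz20] at e3; linarith
  exact ⟨hae, hbe, hce, hde, hee, hfe⟩

set_option maxHeartbeats 1000000 in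
/-- Every finite-index subgroup is in Hermite normal form. -/
theorem exists_Hnf (H : AddSubgroup (ℤ × ℤ × ℤ)) (hne : H.index ≠ 0) :
    ∃ (A D F : ℕ) (b c e : ℤ), 0 < A ∧ 0 < D ∧ 0 < F ∧
      0 ≤ b ∧ b < (D : ℤ) ∧ 0 ≤ c ∧ c < (F : ℤ) ∧ 0 ≤ e ∧ e < (F : ℤ) ∧
      H = Hnf (A : ℤ) b c (D : ℤ) e (F : ℤ) := by
  classical
  haveI : H.FiniteIndex := ⟨hne⟩
  set n := H.index with hn
  have hnpos : 0 < n := Nat.pos_of_ne_zero hne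
  have h1 : ((n : ℤ), 0, 0) ∈ H := by
    have := AddSubgroup.nsmul_index_mem H ((1 : ℤ), (0 : ℤ), (0 : ℤ))
    simpa using this
  have h2 : ((0 : ℤ), (n : ℤ), 0) ∈ H := by
    have := AddSubgroup.nsmul_index_mem H ((0 : ℤ), (1 : ℤ), (0 : ℤ))
    simpa using this
  have h3 : ((0 : ℤ), 0, (n : ℤ)) ∈ H := by
    have := AddSubgroup.nsmul_index_mem H ((0 : ℤ), (0 : ℤ), (1 : ℤ))
    simpa using this
  have exA : ∃ m : ℕ, 0 < m ∧ ∃ v w : ℤ, ((m : ℤ), v, w) ∈ H := ⟨n, hnpos, 0, 0, h1⟩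
  have exD : ∃ m : ℕ, 0 < m ∧ ∃ w : ℤ, ((0 : ℤ), (m : ℤ), w) ∈ H := ⟨n, hnpos, 0, h2⟩
  have exF : ∃ m : ℕ, 0 < m ∧ ((0 : ℤ), (0 : ℤ), (m : ℤ)) ∈ H := ⟨n, hnpos, h3⟩
  set A := Nat.find exA with hAdef
  set D := Nat.find exD with hDdef
  set F := Nat.find exF with hFdef
  obtain ⟨hApos, v₀, w₀, hg1₀⟩ := Nat.find_spec exA
  obtain ⟨hDpos, e₀, hg2₀⟩ := Nat.find_spec exD
  obtain ⟨hFpos, hg3₀⟩ := Nat.find_spec exF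
  have hA0 : (0 : ℤ) < (A : ℤ) := by exact_mod_cast hApos
  have hD0 : (0 : ℤ) < (D : ℤ) := by exact_mod_cast hDpos
  have hF0 : (0 : ℤ) < (F : ℤ) := by exact_mod_cast hFpos
  -- divisibility claims
  have dvdA : ∀ u v w : ℤ, (u, v, w) ∈ H → (A : ℤ) ∣ u := by
    intro u v w huvw
    set x := u / (A : ℤ) with hxdef
    set r := u % (A : ℤ) with hrdef
    have hdm : (A : ℤ) * x + r = u := Int.mul_ediv_add_emod u (A : ℤ)
    have hr0 : 0 ≤ r := Int.emod_nonneg u hA0.ne'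
    have hrA : r < (A : ℤ) := Int.emod_lt_of_pos u hA0
    have hmem : (r, v - x * v₀, w - x * w₀) ∈ H := by
      have hsub := H.sub_mem huvw (H.zsmul_mem hg1₀ x)
      have heq : ((u, v, w) : ℤ × ℤ × ℤ) - x • ((A : ℤ), v₀, w₀)
          = (r, v - x * v₀, w - x * w₀) := by
        refine Prod.ext ?_ (Prod.ext ?_ ?_) <;>
          simp only [Prod.smul_mk, smul_eq_mul, Prod.mk_sub_mk] <;>
          first | ring1 | linarith [hdm]
      rwa [heq] at hsub
    by_contra hdvd
    have hrne : r ≠ 0 := fun h0 => hdvd (Int.dvd_of_emod_eq_zero h0)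
    exact Nat.find_min exA (show r.toNat < A by omega)
      ⟨by omega, v - x * v₀, w - x * w₀, by rwa [Int.toNat_of_nonneg hr0]⟩
  have dvdD : ∀ v w : ℤ, ((0 : ℤ), v, w) ∈ H → (D : ℤ) ∣ v := by
    intro v w hvw
    set y := v / (D : ℤ) with hydef
    set r := v % (D : ℤ) with hrdef
    have hdm : (D : ℤ) * y + r = v := Int.mul_ediv_add_emod v (D : ℤ)
    have hr0 : 0 ≤ r := Int.emod_nonneg v hD0.ne'
    have hrD : r < (D : ℤ) := Int.emod_lt_of_pos v hD0
    have hmem : ((0 : ℤ), r, w - y * e₀) ∈ H := by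
      have hsub := H.sub_mem hvw (H.zsmul_mem hg2₀ y)
      have heq : ((0, v, w) : ℤ × ℤ × ℤ) - y • ((0 : ℤ), (D : ℤ), e₀)
          = (0, r, w - y * e₀) := by
        refine Prod.ext ?_ (Prod.ext ?_ ?_) <;>
          simp only [Prod.smul_mk, smul_eq_mul, Prod.mk_sub_mk] <;>
          first | ring1 | linarith [hdm]
      rwa [heq] at hsub
    by_contra hdvd
    have hrne : r ≠ 0 := fun h0 => hdvd (Int.dvd_of_emod_eq_zero h0)
    exact Nat.find_min exD (show r.toNat < D by omega)
      ⟨by omega, w - y * e₀, by rwa [Int.toNat_of_nonneg hr0]⟩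
  have dvdF : ∀ w : ℤ, ((0 : ℤ), (0 : ℤ), w) ∈ H → (F : ℤ) ∣ w := by
    intro w hw
    set z := w / (F : ℤ) with hzdef
    set r := w % (F : ℤ) with hrdef
    have hdm : (F : ℤ) * z + r = w := Int.mul_ediv_add_emod w (F : ℤ)
    have hr0 : 0 ≤ r := Int.emod_nonneg w hF0.ne'
    have hrF : r < (F : ℤ) := Int.emod_lt_of_pos w hF0
    have hmem : ((0 : ℤ), (0 : ℤ), r) ∈ H := by
      have hsub := H.sub_mem hw (H.zsmul_mem hg3₀ z)
      have heq : ((0, 0, w) : ℤ × ℤ × ℤ) - z • ((0 : ℤ), (0 : ℤ), (F : ℤ))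
          = (0, 0, r) := by
        refine Prod.ext ?_ (Prod.ext ?_ ?_) <;>
          simp only [Prod.smul_mk, smul_eq_mul, Prod.mk_sub_mk] <;>
          first | ring1 | linarith [hdm]
      rwa [heq] at hsub
    by_contra hdvd
    have hrne : r ≠ 0 := fun h0 => hdvd (Int.dvd_of_emod_eq_zero h0)
    exact Nat.find_min exF (show r.toNat < F by omega)
      ⟨by omega, by rwa [Int.toNat_of_nonneg hr0]⟩
  -- reduced generators
  set b := v₀ % (D : ℤ) with hbdef
  set q1 := v₀ / (D : ℤ) with hq1def
  have hdm1 : (D : ℤ) * q1 + b = v₀ := Int.mul_ediv_add_emod v₀ (D : ℤ)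
  set w₁ := w₀ - q1 * e₀ with hw₁def
  set c := w₁ % (F : ℤ) with hcdef
  set q2 := w₁ / (F : ℤ) with hq2def
  have hdm2 : (F : ℤ) * q2 + c = w₁ := Int.mul_ediv_add_emod w₁ (F : ℤ)
  set e := e₀ % (F : ℤ) with hedef
  set q3 := e₀ / (F : ℤ) with hq3def
  have hdm3 : (F : ℤ) * q3 + e = e₀ := Int.mul_ediv_add_emod e₀ (F : ℤ)
  have g1 : (((A : ℤ), b, c) : ℤ × ℤ × ℤ) ∈ H := by
    have hs1 := H.sub_mem hg1₀ (H.zsmul_mem hg2₀ q1)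
    have he1 : (((A : ℤ), v₀, w₀) : ℤ × ℤ × ℤ) - q1 • ((0 : ℤ), (D : ℤ), e₀)
        = ((A : ℤ), b, w₁) := by
      refine Prod.ext ?_ (Prod.ext ?_ ?_) <;>
        simp only [Prod.smul_mk, smul_eq_mul, Prod.mk_sub_mk] <;>
        first | ring1 | linarith [hdm1]
    rw [he1] at hs1
    have hs2 := H.sub_mem hs1 (H.zsmul_mem hg3₀ q2)
    have he2 : (((A : ℤ), b, w₁) : ℤ × ℤ × ℤ) - q2 • ((0 : ℤ), (0 : ℤ), (F : ℤ))
        = ((A : ℤ), b, c) := by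
      refine Prod.ext ?_ (Prod.ext ?_ ?_) <;>
        simp only [Prod.smul_mk, smul_eq_mul, Prod.mk_sub_mk] <;>
        first | ring1 | linarith [hdm2]
    rwa [he2] at hs2
  have g2 : (((0 : ℤ), (D : ℤ), e) : ℤ × ℤ × ℤ) ∈ H := by
    have hs1 := H.sub_mem hg2₀ (H.zsmul_mem hg3₀ q3)
    have he1 : (((0 : ℤ), (D : ℤ), e₀) : ℤ × ℤ × ℤ) - q3 • ((0 : ℤ), (0 : ℤ), (F : ℤ))
        = ((0 : ℤ), (D : ℤ), e) := by
      refine Prod.ext ?_ (Prod.ext ?_ ?_) <;>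
        simp only [Prod.smul_mk, smul_eq_mul, Prod.mk_sub_mk] <;>
        first | ring1 | linarith [hdm3]
    rwa [he1] at hs1
  refine ⟨A, D, F, b, c, e, hApos, hDpos, hFpos,
    Int.emod_nonneg _ hD0.ne', Int.emod_lt_of_pos _ hD0,
    Int.emod_nonneg _ hF0.ne', Int.emod_lt_of_pos _ hF0,
    Int.emod_nonneg _ hF0.ne', Int.emod_lt_of_pos _ hF0, ?_⟩
  ext u
  obtain ⟨u, v, w⟩ := u
  constructor
  · intro hu
    obtain ⟨x, hx⟩ := dvdA u v w hu
    have m2 : ((0 : ℤ), v - x * b, w - x * c) ∈ H := by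
      have hs := H.sub_mem hu (H.zsmul_mem g1 x)
      have he' : ((u, v, w) : ℤ × ℤ × ℤ) - x • (((A : ℤ), b, c) : ℤ × ℤ × ℤ)
          = (0, v - x * b, w - x * c) := by
        refine Prod.ext ?_ (Prod.ext ?_ ?_) <;>
          simp only [Prod.smul_mk, smul_eq_mul, Prod.mk_sub_mk] <;>
          first | ring1 | linarith [hx]
      rwa [he'] at hs
    obtain ⟨y, hy⟩ := dvdD _ _ m2
    have m3 : ((0 : ℤ), (0 : ℤ), w - x * c - y * e) ∈ H := by
      have hs := H.sub_mem m2 (H.zsmul_mem g2 y)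
      have he' : ((0, v - x * b, w - x * c) : ℤ × ℤ × ℤ)
          - y • (((0 : ℤ), (D : ℤ), e) : ℤ × ℤ × ℤ)
          = (0, 0, w - x * c - y * e) := by
        refine Prod.ext ?_ (Prod.ext ?_ ?_) <;>
          simp only [Prod.smul_mk, smul_eq_mul, Prod.mk_sub_mk] <;>
          first | ring1 | linarith [hy]
      rwa [he'] at hs
    obtain ⟨z, hz⟩ := dvdF _ m3
    refine ⟨x, y, z, ?_⟩
    refine Prod.ext ?_ (Prod.ext ?_ ?_) <;>
      simp only [Prod.smul_mk, smul_eq_mul, Prod.mk_sub_mk] <;>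
      linarith [hx, hy, hz]
  · intro hm
    obtain ⟨x, y, z, hx⟩ := hm
    rw [hx]
    have heq : ((x * (A : ℤ), x * b + y * (D : ℤ), x * c + y * e + z * (F : ℤ)) : ℤ × ℤ × ℤ)
        = x • (((A : ℤ), b, c) : ℤ × ℤ × ℤ) + y • ((0 : ℤ), (D : ℤ), e)
          + z • ((0 : ℤ), (0 : ℤ), (F : ℤ)) := by
      refine Prod.ext ?_ (Prod.ext ?_ ?_) <;>
        simp only [Prod.smul_mk, smul_eq_mul, Prod.mk_add_mk] <;> ring
    rw [heq]
    exact H.add_mem (H.add_mem (H.zsmul_mem g1 x) (H.zsmul_mem g2 y)) (H.zsmul_mem hg3₀ z)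

set_option maxHeartbeats 2000000 in
theorem heisenberg_subring_count'
    (p : ℕ) (hp : p.Prime) (N : ℕ) :
    {H : AddSubgroup (ℤ × ℤ × ℤ) |
        (∀ u ∈ H, ∀ v ∈ H, heisenbergBracket u v ∈ H) ∧ H.index = p ^ N}.Finite ∧
      Nat.card {H : AddSubgroup (ℤ × ℤ × ℤ) //
          (∀ u ∈ H, ∀ v ∈ H, heisenbergBracket u v ∈ H) ∧ H.index = p ^ N} =
        ∑ m ∈ (Finset.Nat.antidiagonalTuple 3 N).filter (fun m => m 2 ≤ m 0 + m 1),
          p ^ (m 1 + 2 * m 2) := by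
  classical
  have hp1 : 1 < p := hp.one_lt
  have hppos : 0 < p := hp.pos
  set S : Set (AddSubgroup (ℤ × ℤ × ℤ)) :=
    {H | (∀ u ∈ H, ∀ v ∈ H, heisenbergBracket u v ∈ H) ∧ H.index = p ^ N} with hS
  set T : Finset (Fin 3 → ℕ) :=
    (Finset.Nat.antidiagonalTuple 3 N).filter (fun m => m 2 ≤ m 0 + m 1) with hT
  set Dfin : Finset (Σ _ : Fin 3 → ℕ, ℤ × ℤ × ℤ) :=
    T.sigma (fun m => Finset.Ico (0 : ℤ) ((p : ℤ) ^ (m 1)) ×ˢ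
      (Finset.Ico (0 : ℤ) ((p : ℤ) ^ (m 2)) ×ˢ Finset.Ico (0 : ℤ) ((p : ℤ) ^ (m 2))))
    with hDfin
  set Φ : (Σ _ : Fin 3 → ℕ, ℤ × ℤ × ℤ) → AddSubgroup (ℤ × ℤ × ℤ) :=
    fun t => Hnf ((p ^ (t.1 0) : ℕ) : ℤ) t.2.1 t.2.2.1 ((p ^ (t.1 1) : ℕ) : ℤ) t.2.2.2
      ((p ^ (t.1 2) : ℕ) : ℤ) with hΦ
  have memT : ∀ m : Fin 3 → ℕ, m ∈ T ↔ (m 0 + m 1 + m 2 = N ∧ m 2 ≤ m 0 + m 1) := by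
    intro m
    rw [hT, Finset.mem_filter, Finset.Nat.mem_antidiagonalTuple, Fin.sum_univ_three]
  have memD : ∀ t : (Σ _ : Fin 3 → ℕ, ℤ × ℤ × ℤ), t ∈ Dfin ↔
      (t.1 ∈ T ∧ 0 ≤ t.2.1 ∧ t.2.1 < (p : ℤ) ^ (t.1 1) ∧ 0 ≤ t.2.2.1 ∧
        t.2.2.1 < (p : ℤ) ^ (t.1 2) ∧ 0 ≤ t.2.2.2 ∧ t.2.2.2 < (p : ℤ) ^ (t.1 2)) := by
    intro t
    rw [hDfin, Finset.mem_sigma, Finset.mem_product, Finset.mem_product,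
      Finset.mem_Ico, Finset.mem_Ico, Finset.mem_Ico]
    tauto
  -- every datum gives an element of S
  have himg : ∀ t ∈ Dfin, Φ t ∈ S := by
    rintro ⟨m, b, c, e⟩ ht
    obtain ⟨hmT, hb0, hb1, hc0, hc1, he0, he1⟩ := (memD _).mp ht
    obtain ⟨hsum, hle⟩ := (memT _).mp hmT
    have hA0 : (0 : ℤ) < ((p ^ (m 0) : ℕ) : ℤ) := by positivity
    have hD0 : (0 : ℤ) < ((p ^ (m 1) : ℕ) : ℤ) := by positivity
    have hF0 : (0 : ℤ) < ((p ^ (m 2) : ℕ) : ℤ) := by positivity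
    constructor
    · refine (Hnf_closed_iff hA0 hD0 hF0).mpr ?_
      have : ((p ^ (m 2) : ℕ) : ℤ) ∣ ((p ^ (m 0 + m 1) : ℕ) : ℤ) := by
        exact_mod_cast Int.natCast_dvd_natCast.mpr (pow_dvd_pow p hle)
      convert this using 1
      push_cast [pow_add]
      ring
    · rw [hΦ]
      simp only
      rw [Hnf_index (pow_pos hppos _) (pow_pos hppos _) (pow_pos hppos _)]
      rw [← pow_add, ← pow_add, hsum]
  -- every element of S comes from a datum
  have hsurj : ∀ H ∈ S, ∃ t ∈ Dfin, Φ t = H := by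
    intro H hH
    obtain ⟨hclosed, hindex⟩ := hH
    have hne : H.index ≠ 0 := by rw [hindex]; positivity
    obtain ⟨A, D, F, b, c, e, hApos, hDpos, hFpos, hb0, hb1, hc0, hc1, he0, he1, hHnf⟩ :=
      exists_Hnf H hne
    have hADF : A * D * F = p ^ N := by
      rw [hHnf, Hnf_index hApos hDpos hFpos] at hindex
      exact hindex
    have hAdvd : A ∣ p ^ N := ⟨D * F, by rw [← hADF]; ring⟩
    have hDdvd : D ∣ p ^ N := ⟨A * F, by rw [← hADF]; ring⟩
    have hFdvd : F ∣ p ^ N := ⟨A * D, by rw [← hADF]; ring⟩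
    obtain ⟨m0, hm0le, hm0⟩ := (Nat.dvd_prime_pow hp).mp hAdvd
    obtain ⟨m1, hm1le, hm1⟩ := (Nat.dvd_prime_pow hp).mp hDdvd
    obtain ⟨m2, hm2le, hm2⟩ := (Nat.dvd_prime_pow hp).mp hFdvd
    have hsum : m0 + m1 + m2 = N := by
      have : p ^ (m0 + m1 + m2) = p ^ N := by
        rw [pow_add, pow_add, ← hm0, ← hm1, ← hm2, hADF]
      exact Nat.pow_right_injective hp.two_le this
    have hA0 : (0 : ℤ) < ((A : ℕ) : ℤ) := by exact_mod_cast hApos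
    have hD0 : (0 : ℤ) < ((D : ℕ) : ℤ) := by exact_mod_cast hDpos
    have hF0 : (0 : ℤ) < ((F : ℕ) : ℤ) := by exact_mod_cast hFpos
    have hdvd : ((F : ℕ) : ℤ) ∣ ((A : ℕ) : ℤ) * ((D : ℕ) : ℤ) := by
      rw [hHnf] at hclosed
      exact (Hnf_closed_iff hA0 hD0 hF0).mp hclosed
    have hle : m2 ≤ m0 + m1 := by
      have hdvdn : F ∣ A * D := by exact_mod_cast hdvd
      rw [hm0, hm1, hm2, ← pow_add] at hdvdn
      exact (Nat.pow_dvd_pow_iff_le_right hp1).mp hdvdn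
    refine ⟨⟨![m0, m1, m2], (b, c, e)⟩, ?_, ?_⟩
    · rw [memD]
      refine ⟨(memT _).mpr ⟨by simpa using hsum, by simpa using hle⟩, ?_, ?_, ?_, ?_, ?_, ?_⟩
      · exact hb0
      · show b < (p : ℤ) ^ (m1)
        rw [hm1] at hb1
        exact_mod_cast hb1
      · exact hc0
      · show c < (p : ℤ) ^ (m2)
        rw [hm2] at hc1
        exact_mod_cast hc1
      · exact he0
      · show e < (p : ℤ) ^ (m2)
        rw [hm2] at he1
        exact_mod_cast he1
    · show Hnf ((p ^ m0 : ℕ) : ℤ) b c ((p ^ m1 : ℕ) : ℤ) e ((p ^ m2 : ℕ) : ℤ) = H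
      rw [hHnf, hm0, hm1, hm2]
  -- the image description of S
  have himage : S = ↑(Dfin.image Φ) := by
    ext H
    simp only [Finset.coe_image, Set.mem_image, Finset.mem_coe]
    constructor
    · intro hH
      exact hsurj H hH
    · rintro ⟨t, ht, rfl⟩
      exact himg t ht
  have hinj : Set.InjOn Φ ↑Dfin := by
    rintro ⟨m, b, c, e⟩ ht ⟨m', b', c', e'⟩ ht' heq
    rw [Finset.mem_coe] at ht ht'
    obtain ⟨hmT, hb0, hb1, hc0, hc1, he0, he1⟩ := (memD _).mp ht
    obtain ⟨hmT', hb0', hb1', hc0', hc1', he0', he1'⟩ := (memD _).mp ht'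
    have hkey := Hnf_data_unique
      (a := ((p ^ (m 0) : ℕ) : ℤ)) (b := b) (c := c) (d := ((p ^ (m 1) : ℕ) : ℤ))
      (e := e) (f := ((p ^ (m 2) : ℕ) : ℤ))
      (by positivity) (by positivity) (by positivity)
      hb0 (by exact_mod_cast hb1) hc0 (by exact_mod_cast hc1) he0 (by exact_mod_cast he1)
      (by positivity) (by positivity) (by positivity)
      hb0' (by exact_mod_cast hb1') hc0' (by exact_mod_cast hc1') he0'
      (by exact_mod_cast he1') heq
    obtain ⟨e0, eb, ec, e1, ee, e2⟩ := hkey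
    have hm0 : m 0 = m' 0 :=
      Nat.pow_right_injective hp.two_le (by exact_mod_cast e0)
    have hm1 : m 1 = m' 1 :=
      Nat.pow_right_injective hp.two_le (by exact_mod_cast e1)
    have hm2 : m 2 = m' 2 :=
      Nat.pow_right_injective hp.two_le (by exact_mod_cast e2)
    have hmm : m = m' := by
      funext i
      fin_cases i
      · exact hm0
      · exact hm1
      · exact hm2
    subst hmm
    have : ((b, c, e) : ℤ × ℤ × ℤ) = (b', c', e') := by
      rw [eb, ec, ee]
    rw [this]
  have hfin : S.Finite := himage ▸ (Dfin.image Φ).finite_toSet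
  refine ⟨hfin, ?_⟩
  have hc1 : Nat.card {H : AddSubgroup (ℤ × ℤ × ℤ) //
      (∀ u ∈ H, ∀ v ∈ H, heisenbergBracket u v ∈ H) ∧ H.index = p ^ N} = S.ncard :=
    Nat.card_coe_set_eq S
  rw [hc1, himage, Set.ncard_coe_finset, Finset.card_image_of_injOn hinj, hDfin,
    Finset.card_sigma]
  refine Finset.sum_congr rfl ?_
  intro m hm
  rw [Finset.card_product, Finset.card_product, Int.card_Ico, Int.card_Ico]
  have hto : ∀ k : ℕ, ((p : ℤ) ^ k - 0).toNat = p ^ k := by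
    intro k
    rw [sub_zero]
    norm_cast
  rw [hto, hto, ← pow_add, ← pow_add]
  congr 1
  ring

/-- For the Heisenberg Lie ring `L` over `ℤ` and any prime `p`, the number of Lie subrings of
`L` of additive index `p^N` is finite and equals `∑ p^{m₂ + 2m₃}`, the sum running over all
triples `(m₁,m₂,m₃)` of non-negative integers with `m₁ + m₂ + m₃ = N` and `m₃ ≤ m₁ + m₂`.
(Equivalently, `ζ_{L,p}(s) = ζ_p(s)ζ_p(s-1)ζ_p(2s-2)ζ_p(2s-3)ζ_p(3s-3)⁻¹`.) -/
theorem heisenberg_subring_count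
    (p : ℕ) (hp : p.Prime) (N : ℕ) :
    {H : AddSubgroup (ℤ × ℤ × ℤ) |
        (∀ u ∈ H, ∀ v ∈ H, heisenbergBracket u v ∈ H) ∧ H.index = p ^ N}.Finite ∧
      Nat.card {H : AddSubgroup (ℤ × ℤ × ℤ) //
          (∀ u ∈ H, ∀ v ∈ H, heisenbergBracket u v ∈ H) ∧ H.index = p ^ N} =
        ∑ m ∈ (Finset.Nat.antidiagonalTuple 3 N).filter (fun m => m 2 ≤ m 0 + m 1),
          p ^ (m 1 + 2 * m 2) :=
  heisenberg_subring_count' p hp N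
end

section
/- Let L be the Heisenberg Lie ring over ℤ and let p be a prime. For every N ≥ 0, the number of Lie ideals of L of additive index p^N is finite and equals ∑ p^{b + 2c}, where the sum runs over all triples (a, b, c) of non-negative integers with a + b + 3c = N. (Equivalently, the ideal zeta function satisfies ζ^◁_{L,p}(s) = 1/((1−p^{−s})(1−p^{1−s})(1−p^{2−3s})) for all primes p, whence ζ^◁_L(s) = ζ(s)ζ(s−1)ζ(3s−2).) -/
open Finset

/-- The HNF-parametrized subgroup of ℤ³ generated by `(A,s,t)`, `(0,B,u)`, `(0,0,C)`. -/
def Hset (A B C s t u : ℤ) : AddSubgroup (ℤ × ℤ × ℤ) where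
  carrier := {w | ∃ m n k : ℤ, w = (m * A, m * s + n * B, m * t + n * u + k * C)}
  zero_mem' := ⟨0, 0, 0, by simp; rfl⟩
  add_mem' := by
    rintro a b ⟨m, n, k, rfl⟩ ⟨m', n', k', rfl⟩
    exact ⟨m + m', n + n', k + k', by ext <;> simp <;> ring⟩
  neg_mem' := by
    rintro a ⟨m, n, k, rfl⟩
    exact ⟨-m, -n, -k, by ext <;> simp <;> ring⟩

lemma mem_Hset {A B C s t u : ℤ} {w : ℤ × ℤ × ℤ} :
    w ∈ Hset A B C s t u ↔ ∃ m n k : ℤ, w = (m * A, m * s + n * B, m * t + n * u + k * C) :=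
  Iff.rfl

lemma mult_zero_of_small {m A d : ℤ} (hA : 0 < A) (hd : d = m * A) (h1 : -A < d) (h2 : d < A) :
    m = 0 ∧ d = 0 := by
  rcases lt_trichotomy m 0 with h | h | h
  · nlinarith
  · exact ⟨h, by simp [hd, h]⟩
  · nlinarith

lemma Hset_gen1 (A B C s t u : ℤ) : (A, s, t) ∈ Hset A B C s t u :=
  ⟨1, 0, 0, by ext <;> simp⟩

lemma Hset_gen2 (A B C s t u : ℤ) : ((0 : ℤ), B, u) ∈ Hset A B C s t u :=
  ⟨0, 1, 0, by ext <;> simp⟩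

lemma Hset_gen3 (A B C s t u : ℤ) : ((0 : ℤ), (0 : ℤ), C) ∈ Hset A B C s t u :=
  ⟨0, 0, 1, by ext <;> simp⟩

lemma Hset_fst_dvd {A B C s t u : ℤ} {w : ℤ × ℤ × ℤ} (hw : w ∈ Hset A B C s t u) :
    A ∣ w.1 := by
  obtain ⟨m, n, k, rfl⟩ := hw; exact ⟨m, by ring⟩

lemma Hset_snd_dvd {A B C s t u : ℤ} (hA : A ≠ 0) {w : ℤ × ℤ × ℤ}
    (hw : w ∈ Hset A B C s t u) (h1 : w.1 = 0) : B ∣ w.2.1 := by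
  obtain ⟨m, n, k, rfl⟩ := hw
  simp only at h1 ⊢
  have hm : m = 0 := by
    rcases mul_eq_zero.mp h1 with h | h
    · exact h
    · exact absurd h hA
  exact ⟨n, by rw [hm]; ring⟩

lemma Hset_trd_dvd {A B C s t u : ℤ} (hA : A ≠ 0) (hB : B ≠ 0) {w : ℤ × ℤ × ℤ}
    (hw : w ∈ Hset A B C s t u) (h1 : w.1 = 0) (h2 : w.2.1 = 0) : C ∣ w.2.2 := by
  obtain ⟨m, n, k, rfl⟩ := hw
  simp only at h1 h2 ⊢
  have hm : m = 0 := by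
    rcases mul_eq_zero.mp h1 with h | h
    · exact h
    · exact absurd h hA
  rw [hm] at h2
  simp only [zero_mul, zero_add] at h2
  have hn : n = 0 := by
    rcases mul_eq_zero.mp h2 with h | h
    · exact h
    · exact absurd h hB
  exact ⟨k, by rw [hm, hn]; ring⟩

lemma Hset_zz_mem {A B C s t u : ℤ} {x : ℤ} (hx : C ∣ x) :
    ((0 : ℤ), (0 : ℤ), x) ∈ Hset A B C s t u := by
  obtain ⟨k, rfl⟩ := hx
  exact ⟨0, 0, k, by ext <;> simp [mul_comm]⟩

lemma Hset_index (a b c : ℕ) (ha : 0 < a) (hb : 0 < b) (hc : 0 < c) (s t u : ℤ) :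
    (Hset (a : ℤ) (b : ℤ) (c : ℤ) s t u).index = a * b * c := by
  set H := Hset (a : ℤ) (b : ℤ) (c : ℤ) s t u with hH
  have ha' : (0 : ℤ) < a := by exact_mod_cast ha
  have hb' : (0 : ℤ) < b := by exact_mod_cast hb
  have hc' : (0 : ℤ) < c := by exact_mod_cast hc
  let φ : Fin a × Fin b × Fin c → (ℤ × ℤ × ℤ) ⧸ H :=
    fun x => QuotientAddGroup.mk ((x.1 : ℤ), (x.2.1 : ℤ), (x.2.2 : ℤ))
  have hinj : Function.Injective φ := by
    rintro ⟨i, j, k⟩ ⟨i', j', k'⟩ h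
    have h2 := (QuotientAddGroup.eq (s := H)).mp h
    rw [mem_Hset] at h2
    obtain ⟨m, n, l, hmnl⟩ := h2
    rw [Prod.ext_iff, Prod.ext_iff] at hmnl
    simp only [Prod.fst_add, Prod.snd_add, Prod.fst_neg, Prod.snd_neg] at hmnl
    obtain ⟨e1, e2, e3⟩ := hmnl
    have hi : (i : ℤ) < a := by exact_mod_cast i.2
    have hi' : (i' : ℤ) < a := by exact_mod_cast i'.2
    have hj : (j : ℤ) < b := by exact_mod_cast j.2
    have hj' : (j' : ℤ) < b := by exact_mod_cast j'.2
    have hk : (k : ℤ) < c := by exact_mod_cast k.2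
    have hk' : (k' : ℤ) < c := by exact_mod_cast k'.2
    have hi0 : (0 : ℤ) ≤ i := Int.natCast_nonneg _
    have hi0' : (0 : ℤ) ≤ i' := Int.natCast_nonneg _
    have hj0 : (0 : ℤ) ≤ j := Int.natCast_nonneg _
    have hj0' : (0 : ℤ) ≤ j' := Int.natCast_nonneg _
    have hk0 : (0 : ℤ) ≤ k := Int.natCast_nonneg _
    have hk0' : (0 : ℤ) ≤ k' := Int.natCast_nonneg _
    obtain ⟨hm0, hd1⟩ := mult_zero_of_small ha' e1 (by linarith) (by linarith)
    rw [hm0] at e2 e3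
    have e2' : -(j : ℤ) + (j' : ℤ) = n * b := by linarith
    obtain ⟨hn0, hd2⟩ := mult_zero_of_small hb' e2' (by linarith) (by linarith)
    rw [hn0] at e3
    have e3' : -(k : ℤ) + (k' : ℤ) = l * c := by linarith
    obtain ⟨hl0, hd3⟩ := mult_zero_of_small hc' e3' (by linarith) (by linarith)
    have : (i : ℤ) = i' := by linarith
    have hii : i = i' := Fin.ext (by exact_mod_cast this)
    have : (j : ℤ) = j' := by linarith
    have hjj : j = j' := Fin.ext (by exact_mod_cast this)
    have : (k : ℤ) = k' := by linarith
    have hkk : k = k' := Fin.ext (by exact_mod_cast this)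
    simp [hii, hjj, hkk]
  have hsurj : Function.Surjective φ := by
    intro q
    induction q using QuotientAddGroup.induction_on with
    | H w =>
      obtain ⟨w1, w2, w3⟩ := w
      set m := w1 / a with hm
      set x := w1 % a with hx
      have hx1 : x + (a : ℤ) * m = w1 := Int.emod_add_mul_ediv w1 a
      set n := (w2 - m * s) / b with hn
      set y := (w2 - m * s) % b with hy
      have hy1 : y + (b : ℤ) * n = w2 - m * s := Int.emod_add_mul_ediv _ b
      set l := (w3 - m * t - n * u) / c with hl
      set z := (w3 - m * t - n * u) % c with hz
      have hz1 : z + (c : ℤ) * l = w3 - m * t - n * u := Int.emod_add_mul_ediv _ c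
      have hx0 : 0 ≤ x := Int.emod_nonneg _ (by positivity)
      have hxa : x < a := Int.emod_lt_of_pos _ ha'
      have hy0 : 0 ≤ y := Int.emod_nonneg _ (by positivity)
      have hyb : y < b := Int.emod_lt_of_pos _ hb'
      have hz0 : 0 ≤ z := Int.emod_nonneg _ (by positivity)
      have hzc : z < c := Int.emod_lt_of_pos _ hc'
      refine ⟨(⟨x.toNat, ?_⟩, ⟨y.toNat, ?_⟩, ⟨z.toNat, ?_⟩), ?_⟩
      · omega
      · omega
      · omega
      · show QuotientAddGroup.mk _ = QuotientAddGroup.mk _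
        rw [QuotientAddGroup.eq]
        rw [mem_Hset]
        refine ⟨m, n, l, ?_⟩
        have : (x.toNat : ℤ) = x := Int.toNat_of_nonneg hx0
        have hyy : (y.toNat : ℤ) = y := Int.toNat_of_nonneg hy0
        have hzz : (z.toNat : ℤ) = z := Int.toNat_of_nonneg hz0
        ext <;> simp [this, hyy, hzz] <;> linarith
  have hbij : Function.Bijective φ := ⟨hinj, hsurj⟩
  have := Nat.card_eq_of_bijective φ hbij
  rw [AddSubgroup.index]
  rw [← this]
  simp [Nat.card_eq_fintype_card, mul_assoc]

lemma Hset_unique {A B C s t u A' B' C' s' t' u' : ℤ}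
    (hA : 0 < A) (hB : 0 < B) (hC : 0 < C) (hA' : 0 < A') (hB' : 0 < B') (hC' : 0 < C')
    (hs : 0 ≤ s) (hsB : s < B) (ht : 0 ≤ t) (htC : t < C) (hu : 0 ≤ u) (huC : u < C)
    (hs' : 0 ≤ s') (hsB' : s' < B') (ht' : 0 ≤ t') (htC' : t' < C') (hu' : 0 ≤ u') (huC' : u' < C')
    (h : Hset A B C s t u = Hset A' B' C' s' t' u') :
    A = A' ∧ B = B' ∧ C = C' ∧ s = s' ∧ t = t' ∧ u = u' := by
  have g1 : (A, s, t) ∈ Hset A' B' C' s' t' u' := h ▸ Hset_gen1 A B C s t u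
  have g1' : (A', s', t') ∈ Hset A B C s t u := h ▸ Hset_gen1 A' B' C' s' t' u'
  have g2 : ((0:ℤ), B, u) ∈ Hset A' B' C' s' t' u' := h ▸ Hset_gen2 A B C s t u
  have g2' : ((0:ℤ), B', u') ∈ Hset A B C s t u := h ▸ Hset_gen2 A' B' C' s' t' u'
  have g3 : ((0:ℤ), (0:ℤ), C) ∈ Hset A' B' C' s' t' u' := h ▸ Hset_gen3 A B C s t u
  have g3' : ((0:ℤ), (0:ℤ), C') ∈ Hset A B C s t u := h ▸ Hset_gen3 A' B' C' s' t' u'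
  have hAA : A = A' :=
    Int.dvd_antisymm (le_of_lt hA) (le_of_lt hA') (Hset_fst_dvd g1') (Hset_fst_dvd g1)
  have hBB : B = B' :=
    Int.dvd_antisymm (le_of_lt hB) (le_of_lt hB')
      (Hset_snd_dvd hA.ne' g2' rfl) (Hset_snd_dvd hA'.ne' g2 rfl)
  have hCC : C = C' :=
    Int.dvd_antisymm (le_of_lt hC) (le_of_lt hC')
      (Hset_trd_dvd hA.ne' hB.ne' g3' rfl rfl) (Hset_trd_dvd hA'.ne' hB'.ne' g3 rfl rfl)
  subst hAA; subst hBB; subst hCC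
  obtain ⟨m, n, k, hmnk⟩ := g1
  rw [Prod.ext_iff, Prod.ext_iff] at hmnk
  obtain ⟨e1, e2, e3⟩ := hmnk
  simp only at e1 e2 e3
  have hm : m = 1 := by
    have : (m - 1) * A = 0 := by linarith [e1]
    rcases mul_eq_zero.mp this with h' | h'
    · linarith
    · exact absurd h' hA.ne'
  rw [hm] at e2 e3
  have e2' : s - s' = n * B := by linarith
  obtain ⟨hn0, hd⟩ := mult_zero_of_small hB e2' (by linarith) (by linarith)
  rw [hn0] at e3
  have e3' : t - t' = k * C := by linarith
  obtain ⟨hk0, hd'⟩ := mult_zero_of_small hC e3' (by linarith) (by linarith)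
  obtain ⟨m', n', k', hmnk'⟩ := g2
  rw [Prod.ext_iff, Prod.ext_iff] at hmnk'
  obtain ⟨f1, f2, f3⟩ := hmnk'
  simp only at f1 f2 f3
  have hm' : m' = 0 := by
    rcases mul_eq_zero.mp f1.symm with h' | h'
    · exact h'
    · exact absurd h' hA.ne'
  rw [hm'] at f2 f3
  have hn' : n' = 1 := by
    have : (n' - 1) * B = 0 := by linarith [f2]
    rcases mul_eq_zero.mp this with h' | h'
    · linarith
    · exact absurd h' hB.ne'
  rw [hn'] at f3
  have f3' : u - u' = k' * C := by linarith
  obtain ⟨hk0', hd''⟩ := mult_zero_of_small hC f3' (by linarith) (by linarith)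
  exact ⟨rfl, rfl, rfl, by linarith, by linarith, by linarith⟩

lemma Hset_ideal_iff {A B C s t u : ℤ} (hA : A ≠ 0) (hB : B ≠ 0) :
    (∀ v : ℤ × ℤ × ℤ, ∀ w ∈ Hset A B C s t u, heisenbergBracket v w ∈ Hset A B C s t u) ↔
      (C ∣ A ∧ C ∣ B ∧ C ∣ s) := by
  constructor
  · intro h
    refine ⟨?_, ?_, ?_⟩
    · have := h (0, 1, 0) _ (Hset_gen1 A B C s t u)
      have h' : ((0:ℤ), (0:ℤ), -A) ∈ Hset A B C s t u := by
        convert this using 2 <;> simp [heisenbergBracket]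
      have := Hset_trd_dvd hA hB h' rfl rfl
      simpa using this.neg_right
    · have := h (1, 0, 0) _ (Hset_gen2 A B C s t u)
      have h' : ((0:ℤ), (0:ℤ), B) ∈ Hset A B C s t u := by
        convert this using 2 <;> simp [heisenbergBracket]
      exact Hset_trd_dvd hA hB h' rfl rfl
    · have := h (1, 0, 0) _ (Hset_gen1 A B C s t u)
      have h' : ((0:ℤ), (0:ℤ), s) ∈ Hset A B C s t u := by
        convert this using 2 <;> simp [heisenbergBracket]
      exact Hset_trd_dvd hA hB h' rfl rfl
  · rintro ⟨hCA, hCB, hCs⟩ v w hw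
    obtain ⟨m, n, k, rfl⟩ := hw
    apply Hset_zz_mem
    show C ∣ v.1 * (m * s + n * B) - m * A * v.2.1
    exact dvd_sub (Dvd.dvd.mul_left (dvd_add (Dvd.dvd.mul_left hCs m) (Dvd.dvd.mul_left hCB n)) _)
      (Dvd.dvd.mul_right (Dvd.dvd.mul_left hCA m) _)

lemma exists_gen (K : AddSubgroup ℤ) {n : ℕ} (hn : n ≠ 0) (hmem : (n : ℤ) ∈ K) :
    ∃ d : ℤ, 0 < d ∧ ∀ x : ℤ, x ∈ K ↔ d ∣ x := by
  obtain ⟨g, hg⟩ := Int.subgroup_cyclic K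
  have hmem' : ∀ x : ℤ, x ∈ K ↔ g ∣ x := by
    intro x
    rw [hg, AddSubgroup.mem_closure_singleton]
    constructor
    · rintro ⟨m, rfl⟩; exact ⟨m, by simp [zsmul_eq_mul, mul_comm]⟩
    · rintro ⟨m, rfl⟩; exact ⟨m, by simp [zsmul_eq_mul, mul_comm]⟩
  have hg0 : g ≠ 0 := by
    intro h
    rw [h] at hmem'
    have := (hmem' n).mp hmem
    simp at this
    exact hn (by exact_mod_cast this)
  refine ⟨|g|, abs_pos.mpr hg0, fun x => ?_⟩
  rw [hmem' x, abs_dvd]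

lemma exists_params {H : AddSubgroup (ℤ × ℤ × ℤ)} (hfin : H.index ≠ 0) :
    ∃ A B C s t u : ℤ, 0 < A ∧ 0 < B ∧ 0 < C ∧ 0 ≤ s ∧ s < B ∧ 0 ≤ t ∧ t < C ∧ 0 ≤ u ∧ u < C ∧
      H = Hset A B C s t u := by
  set n := H.index with hn
  let K1 : AddSubgroup ℤ := {
    carrier := {x | ∃ y z, (x, y, z) ∈ H}
    zero_mem' := ⟨0, 0, H.zero_mem⟩
    add_mem' := by
      rintro a b ⟨y, z, ha⟩ ⟨y', z', hb⟩
      exact ⟨y + y', z + z', by simpa using H.add_mem ha hb⟩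
    neg_mem' := by
      rintro a ⟨y, z, ha⟩
      exact ⟨-y, -z, by simpa using H.neg_mem ha⟩ }
  let K2 : AddSubgroup ℤ := {
    carrier := {y | ∃ z, ((0 : ℤ), y, z) ∈ H}
    zero_mem' := ⟨0, H.zero_mem⟩
    add_mem' := by
      rintro a b ⟨z, ha⟩ ⟨z', hb⟩
      exact ⟨z + z', by simpa using H.add_mem ha hb⟩
    neg_mem' := by
      rintro a ⟨z, ha⟩
      exact ⟨-z, by simpa using H.neg_mem ha⟩ }
  let K3 : AddSubgroup ℤ := {
    carrier := {z | ((0 : ℤ), (0 : ℤ), z) ∈ H}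
    zero_mem' := H.zero_mem
    add_mem' := by
      intro a b ha hb
      simpa using H.add_mem ha hb
    neg_mem' := by
      intro a ha
      simpa using H.neg_mem ha }
  have hn1 : ((n : ℤ), (0 : ℤ), (0 : ℤ)) ∈ H := by
    have := AddSubgroup.nsmul_index_mem H ((1 : ℤ), (0 : ℤ), (0 : ℤ))
    convert this using 1
    ext <;> simp [hn]
  have hn2 : ((0 : ℤ), (n : ℤ), (0 : ℤ)) ∈ H := by
    have := AddSubgroup.nsmul_index_mem H ((0 : ℤ), (1 : ℤ), (0 : ℤ))
    convert this using 1
    ext <;> simp [hn]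
  have hn3 : ((0 : ℤ), (0 : ℤ), (n : ℤ)) ∈ H := by
    have := AddSubgroup.nsmul_index_mem H ((0 : ℤ), (0 : ℤ), (1 : ℤ))
    convert this using 1
    ext <;> simp [hn]
  obtain ⟨A, hA, hK1⟩ := exists_gen K1 hfin ⟨0, 0, hn1⟩
  obtain ⟨B, hB, hK2⟩ := exists_gen K2 hfin ⟨0, hn2⟩
  obtain ⟨C, hC, hK3⟩ := exists_gen K3 hfin hn3
  obtain ⟨s₀, t₀, hAst⟩ := (hK1 A).mpr dvd_rfl
  obtain ⟨u₀, hBu⟩ := (hK2 B).mpr dvd_rfl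
  have hC3 : ((0 : ℤ), (0 : ℤ), C) ∈ H := (hK3 C).mpr dvd_rfl
  set n1 := s₀ / B with hn1d
  set s := s₀ % B with hs_def
  have hsB : s = s₀ - B * n1 := Int.emod_def s₀ B
  have h1 : ((A, s, t₀ - n1 * u₀) : ℤ × ℤ × ℤ) ∈ H := by
    have := H.sub_mem hAst (H.zsmul_mem hBu n1)
    convert this using 1
    ext <;> simp [hsB] <;> ring
  set k1 := (t₀ - n1 * u₀) / C with hk1d
  set t := (t₀ - n1 * u₀) % C with ht_def
  have htC' : t = (t₀ - n1 * u₀) - C * k1 := Int.emod_def _ C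
  have h2 : ((A, s, t) : ℤ × ℤ × ℤ) ∈ H := by
    have := H.sub_mem h1 (H.zsmul_mem hC3 k1)
    convert this using 1
    ext <;> simp [htC'] <;> ring
  set k2 := u₀ / C with hk2d
  set u := u₀ % C with hu_def
  have huC' : u = u₀ - C * k2 := Int.emod_def _ C
  have h3 : ((0 : ℤ), B, u) ∈ H := by
    have := H.sub_mem hBu (H.zsmul_mem hC3 k2)
    convert this using 1
    ext <;> simp [huC'] <;> ring
  refine ⟨A, B, C, s, t, u, hA, hB, hC, Int.emod_nonneg _ hB.ne', Int.emod_lt_of_pos _ hB,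
    Int.emod_nonneg _ hC.ne', Int.emod_lt_of_pos _ hC,
    Int.emod_nonneg _ hC.ne', Int.emod_lt_of_pos _ hC, ?_⟩
  ext w
  constructor
  · intro hw
    have d1 : A ∣ w.1 := (hK1 w.1).mp ⟨w.2.1, w.2.2, hw⟩
    obtain ⟨m, hm⟩ := d1
    have hw2 : ((0, w.2.1 - m * s, w.2.2 - m * t) : ℤ × ℤ × ℤ) ∈ H := by
      have := H.sub_mem hw (H.zsmul_mem h2 m)
      convert this using 1
      ext <;> simp <;> first | ring1 | linarith [hm, mul_comm A m]
    have d2 : B ∣ (w.2.1 - m * s) := (hK2 _).mp ⟨_, hw2⟩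
    obtain ⟨nn, hnn⟩ := d2
    have hw3 : ((0, 0, w.2.2 - m * t - nn * u) : ℤ × ℤ × ℤ) ∈ H := by
      have := H.sub_mem hw2 (H.zsmul_mem h3 nn)
      convert this using 1
      ext <;> simp <;> first | ring1 | linarith [hnn, mul_comm B nn]
    have d3 : C ∣ (w.2.2 - m * t - nn * u) := (hK3 _).mp hw3
    obtain ⟨kk, hkk⟩ := d3
    exact ⟨m, nn, kk, by ext <;> simp <;> linarith⟩
  · rintro ⟨m, nn, kk, rfl⟩
    have := H.add_mem (H.add_mem (H.zsmul_mem h2 m) (H.zsmul_mem h3 nn)) (H.zsmul_mem hC3 kk)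
    convert this using 1
    ext <;> simp <;> ring

def TriSet (N : ℕ) : Finset (ℕ × ℕ × ℕ) :=
  (Finset.range (N + 1) ×ˢ Finset.range (N + 1) ×ˢ Finset.range (N + 1)).filter
    (fun t => t.1 + t.2.1 + 3 * t.2.2 = N)

abbrev ParamType (p N : ℕ) : Type :=
  Σ x : {x // x ∈ TriSet N}, Fin (p ^ x.1.2.1) × Fin (p ^ x.1.2.2) × Fin (p ^ x.1.2.2)

def Gmap (p N : ℕ) (hp : p.Prime) : ParamType p N →
    {H : AddSubgroup (ℤ × ℤ × ℤ) //
      (∀ u : ℤ × ℤ × ℤ, ∀ v ∈ H, heisenbergBracket u v ∈ H) ∧ H.index = p ^ N} :=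
  fun y =>
    ⟨Hset ((p ^ (y.1.1.1 + y.1.1.2.2) : ℕ) : ℤ) ((p ^ (y.1.1.2.1 + y.1.1.2.2) : ℕ) : ℤ)
        ((p ^ y.1.1.2.2 : ℕ) : ℤ)
        (((p ^ y.1.1.2.2 : ℕ) : ℤ) * ((y.2.1 : ℕ) : ℤ)) ((y.2.2.1 : ℕ) : ℤ) ((y.2.2.2 : ℕ) : ℤ),
      by
        obtain ⟨⟨⟨a, b, c⟩, hx⟩, s', t, u⟩ := y
        dsimp only
        simp only [TriSet, Finset.mem_filter, Finset.mem_product, Finset.mem_range] at hx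
        have hp0 : 0 < p := hp.pos
        constructor
        · rw [Hset_ideal_iff (by exact_mod_cast (pow_pos hp0 _).ne')
            (by exact_mod_cast (pow_pos hp0 _).ne')]
          refine ⟨?_, ?_, dvd_mul_right _ _⟩
          · exact_mod_cast pow_dvd_pow p (Nat.le_add_left c a)
          · exact_mod_cast pow_dvd_pow p (Nat.le_add_left c b)
        · rw [Hset_index _ _ _ (pow_pos hp0 _) (pow_pos hp0 _) (pow_pos hp0 _)]
          rw [← pow_add, ← pow_add]
          congr 1
          omega⟩

set_option maxHeartbeats 1600000 in
/-- For the Heisenberg Lie ring `L` over `ℤ` and any prime `p`, the number of Lie ideals of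
`L` of additive index `p^N` is finite and equals `∑ p^{b + 2c}`, the sum running over all
triples `(a,b,c)` of non-negative integers with `a + b + 3c = N`. (Equivalently,
`ζ^◁_{L,p}(s) = 1/((1-p^{-s})(1-p^{1-s})(1-p^{2-3s}))`, whence
`ζ^◁_L(s) = ζ(s)ζ(s-1)ζ(3s-2)`.) -/
theorem heisenberg_ideal_count
    (p : ℕ) (hp : p.Prime) (N : ℕ) :
    {H : AddSubgroup (ℤ × ℤ × ℤ) |
        (∀ u : ℤ × ℤ × ℤ, ∀ v ∈ H, heisenbergBracket u v ∈ H) ∧ H.index = p ^ N}.Finite ∧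
      Nat.card {H : AddSubgroup (ℤ × ℤ × ℤ) //
          (∀ u : ℤ × ℤ × ℤ, ∀ v ∈ H, heisenbergBracket u v ∈ H) ∧ H.index = p ^ N} =
        ∑ t ∈ (Finset.range (N + 1) ×ˢ Finset.range (N + 1) ×ˢ Finset.range (N + 1)).filter
            (fun t => t.1 + t.2.1 + 3 * t.2.2 = N),
          p ^ (t.2.1 + 2 * t.2.2) := by
  have hp0 : 0 < p := hp.pos
  have hpow : p ^ N ≠ 0 := (pow_pos hp0 N).ne'
  have hppos : ∀ k : ℕ, (0 : ℤ) < ((p ^ k : ℕ) : ℤ) := fun k => by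
    exact_mod_cast pow_pos hp0 k
  -- injectivity of Gmap
  have hinj : Function.Injective (Gmap p N hp) := by
    rintro ⟨⟨⟨a, b, c⟩, hx⟩, s1, t1, u1⟩ ⟨⟨⟨a', b', c'⟩, hx'⟩, s2, t2, u2⟩ h
    simp only [Gmap, Subtype.mk.injEq] at h
    have hs1b : ((p ^ c : ℕ) : ℤ) * ((s1 : ℕ) : ℤ) < ((p ^ (b + c) : ℕ) : ℤ) := by
      have : (p ^ c) * (s1 : ℕ) < p ^ (b + c) := by
        calc (p ^ c) * (s1 : ℕ) < (p ^ c) * (p ^ b) :=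
              mul_lt_mul_of_pos_left s1.2 (pow_pos hp0 c)
        _ = p ^ (b + c) := by rw [← pow_add]; ring_nf
      exact_mod_cast this
    have hs2b : ((p ^ c' : ℕ) : ℤ) * ((s2 : ℕ) : ℤ) < ((p ^ (b' + c') : ℕ) : ℤ) := by
      have : (p ^ c') * (s2 : ℕ) < p ^ (b' + c') := by
        calc (p ^ c') * (s2 : ℕ) < (p ^ c') * (p ^ b') :=
              mul_lt_mul_of_pos_left s2.2 (pow_pos hp0 c')
        _ = p ^ (b' + c') := by rw [← pow_add]; ring_nf
      exact_mod_cast this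
    obtain ⟨hA, hB, hC, hs, ht, hu⟩ := Hset_unique (hppos _) (hppos _) (hppos _)
      (hppos _) (hppos _) (hppos _)
      (by positivity) hs1b (Int.natCast_nonneg _) (by exact_mod_cast t1.2)
      (Int.natCast_nonneg _) (by exact_mod_cast u1.2)
      (by positivity) hs2b (Int.natCast_nonneg _) (by exact_mod_cast t2.2)
      (Int.natCast_nonneg _) (by exact_mod_cast u2.2) h
    have hac : a + c = a' + c' := Nat.pow_right_injective hp.two_le (by exact_mod_cast hA)
    have hbc : b + c = b' + c' := Nat.pow_right_injective hp.two_le (by exact_mod_cast hB)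
    have hcc : c = c' := Nat.pow_right_injective hp.two_le (by exact_mod_cast hC)
    have haa : a = a' := by omega
    have hbb : b = b' := by omega
    subst haa; subst hbb; subst hcc
    have hsnat : (p ^ c) * (s1 : ℕ) = (p ^ c) * (s2 : ℕ) := by exact_mod_cast hs
    have hss : (s1 : ℕ) = (s2 : ℕ) := Nat.eq_of_mul_eq_mul_left (pow_pos hp0 c) hsnat
    have hxx : hx = hx' := Subsingleton.elim _ _
    subst hxx
    have e1 : s1 = s2 := Fin.ext hss
    have e2 : t1 = t2 := Fin.ext (by exact_mod_cast ht)
    have e3 : u1 = u2 := Fin.ext (by exact_mod_cast hu)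
    subst e1; subst e2; subst e3
    rfl
  -- surjectivity of Gmap
  have hsurj : Function.Surjective (Gmap p N hp) := by
    rintro ⟨H, hIdeal, hIdx⟩
    have hfin : H.index ≠ 0 := by rw [hIdx]; exact hpow
    obtain ⟨A, B, C, s, t, u, hA, hB, hC, hs0, hsB, ht0, htC, hu0, huC, rfl⟩ :=
      exists_params hfin
    obtain ⟨a', rfl⟩ := Int.eq_ofNat_of_zero_le hA.le
    obtain ⟨b', rfl⟩ := Int.eq_ofNat_of_zero_le hB.le
    obtain ⟨c', rfl⟩ := Int.eq_ofNat_of_zero_le hC.le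
    obtain ⟨sn, rfl⟩ := Int.eq_ofNat_of_zero_le hs0
    obtain ⟨tn, rfl⟩ := Int.eq_ofNat_of_zero_le ht0
    obtain ⟨un, rfl⟩ := Int.eq_ofNat_of_zero_le hu0
    have ha' : 0 < a' := by exact_mod_cast hA
    have hb' : 0 < b' := by exact_mod_cast hB
    have hc' : 0 < c' := by exact_mod_cast hC
    rw [Hset_index a' b' c' ha' hb' hc'] at hIdx
    obtain ⟨α, hα, hαe⟩ := (Nat.dvd_prime_pow hp).mp
      (⟨b' * c', by rw [← hIdx]; ring⟩ : a' ∣ p ^ N)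
    obtain ⟨β, hβ, hβe⟩ := (Nat.dvd_prime_pow hp).mp
      (⟨a' * c', by rw [← hIdx]; ring⟩ : b' ∣ p ^ N)
    obtain ⟨γ, hγ, hγe⟩ := (Nat.dvd_prime_pow hp).mp
      (⟨a' * b', by rw [← hIdx]; ring⟩ : c' ∣ p ^ N)
    have hsum : α + β + γ = N := by
      have : p ^ (α + β + γ) = p ^ N := by
        rw [pow_add, pow_add, ← hαe, ← hβe, ← hγe, hIdx]
      exact Nat.pow_right_injective hp.two_le this
    obtain ⟨hCA, hCB, hCs⟩ := (Hset_ideal_iff (by exact_mod_cast hA.ne')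
      (by exact_mod_cast hB.ne')).mp hIdeal
    have hCAn : c' ∣ a' := by exact_mod_cast hCA
    have hCBn : c' ∣ b' := by exact_mod_cast hCB
    have hCsn : c' ∣ sn := by exact_mod_cast hCs
    have hγα : γ ≤ α := by
      rw [hαe, hγe] at hCAn
      exact (Nat.pow_dvd_pow_iff_le_right hp.one_lt).mp hCAn
    have hγβ : γ ≤ β := by
      rw [hβe, hγe] at hCBn
      exact (Nat.pow_dvd_pow_iff_le_right hp.one_lt).mp hCBn
    obtain ⟨s1, hs1⟩ := hCsn
    have hs1lt : s1 < p ^ (β - γ) := by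
      have hsnlt : sn < b' := by exact_mod_cast hsB
      rw [hs1, hβe, hγe] at *
      by_contra hcon
      push_neg at hcon
      have : p ^ γ * p ^ (β - γ) ≤ p ^ γ * s1 := Nat.mul_le_mul_left _ hcon
      rw [← pow_add] at this
      have heq : γ + (β - γ) = β := by omega
      rw [heq] at this
      omega
    have htlt : tn < p ^ γ := by
      have : tn < c' := by exact_mod_cast htC
      rwa [hγe] at this
    have hult : un < p ^ γ := by
      have : un < c' := by exact_mod_cast huC
      rwa [hγe] at this
    have hmem : (α - γ, β - γ, γ) ∈ TriSet N := by
      simp only [TriSet, Finset.mem_filter, Finset.mem_product, Finset.mem_range]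
      omega
    refine ⟨⟨⟨(α - γ, β - γ, γ), hmem⟩, ⟨s1, hs1lt⟩, ⟨tn, htlt⟩, ⟨un, hult⟩⟩, ?_⟩
    apply Subtype.ext
    simp only [Gmap]
    have e1 : α - γ + γ = α := by omega
    have e2 : β - γ + γ = β := by omega
    rw [e1, e2, hαe, hβe, hs1, hγe]
    push_cast
    ring_nf
  -- conclusion
  have hbij : Function.Bijective (Gmap p N hp) := ⟨hinj, hsurj⟩
  have hfinite : Finite {H : AddSubgroup (ℤ × ℤ × ℤ) //
      (∀ u : ℤ × ℤ × ℤ, ∀ v ∈ H, heisenbergBracket u v ∈ H) ∧ H.index = p ^ N} :=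
    Finite.of_surjective _ hsurj
  constructor
  · exact Set.finite_coe_iff.mp hfinite
  · calc Nat.card {H : AddSubgroup (ℤ × ℤ × ℤ) //
          (∀ u : ℤ × ℤ × ℤ, ∀ v ∈ H, heisenbergBracket u v ∈ H) ∧ H.index = p ^ N}
        = Nat.card (ParamType p N) := (Nat.card_eq_of_bijective _ hbij).symm
      _ = ∑ x ∈ (TriSet N).attach, p ^ (x : ℕ × ℕ × ℕ).2.1 *
            (p ^ (x : ℕ × ℕ × ℕ).2.2 * p ^ (x : ℕ × ℕ × ℕ).2.2) := by
          simp [Nat.card_eq_fintype_card, Finset.univ_eq_attach]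
      _ = ∑ x ∈ TriSet N, p ^ x.2.1 * (p ^ x.2.2 * p ^ x.2.2) :=
          Finset.sum_attach (TriSet N) (fun t => p ^ t.2.1 * (p ^ t.2.2 * p ^ t.2.2))
      _ = ∑ x ∈ TriSet N, p ^ (x.2.1 + 2 * x.2.2) := Finset.sum_congr rfl (fun x _ => by ring)
end

section
/- Let p be a prime and let R = ℤ × ℤ be the ring with componentwise addition and componentwise multiplication. For N ≥ 0, let b_{p^N} denote the number of subrings of R of additive index p^N (each finite). Then in the formal power series ring ℤ⟦X⟧, (1 − X)(1 − pX³) · ∑_{N≥0} b_{p^N} X^N = (1 + X)². (Equivalently, ζ_{R,p}(s) = (1+p^{−s})² / ((1−p^{−s})(1−p^{1−3s})) for every prime p.) -/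
open PowerSeries

/-- The number of subrings (additive subgroups closed under the componentwise
multiplication, no unit required) of the ring `ℤ × ℤ` of additive index `p^N`. -/
noncomputable def zxzSubringCount (p N : ℕ) : ℕ :=
  Nat.card {H : NonUnitalSubring (ℤ × ℤ) // H.toAddSubgroup.index = p ^ N}

namespace ZxZCount
open Finset


/-- The candidate subring `{(ta, tb+sc)}`. -/
def lat (a c : ℕ) (b : ℤ) (hcond : (c : ℤ) ∣ b * (b - (a : ℤ))) :
    NonUnitalSubring (ℤ × ℤ) where
  carrier := {z : ℤ × ℤ | ∃ t : ℤ, z.1 = t * a ∧ (c : ℤ) ∣ z.2 - t * b}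
  zero_mem' := ⟨0, by simp⟩
  add_mem' := by
    rintro ⟨x1, y1⟩ ⟨x2, y2⟩ ⟨t1, ht1, ht2⟩ ⟨t2, hs1, hs2⟩
    simp only [Set.mem_setOf_eq] at *
    refine ⟨t1 + t2, ?_, ?_⟩
    · show x1 + x2 = _; rw [ht1, hs1]; ring
    · have := dvd_add ht2 hs2
      convert this using 1
      show y1 + y2 - _ = _; ring
      rfl
  neg_mem' := by
    rintro ⟨x, y⟩ ⟨t, ht1, ht2⟩
    simp only [Set.mem_setOf_eq] at *
    refine ⟨-t, ?_, ?_⟩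
    · show -x = _; rw [ht1]; ring
    · show (c : ℤ) ∣ -y - -t * b
      have h' : -y - -t * b = -(y - t * b) := by ring
      rw [h']
      exact ht2.neg_right
  mul_mem' := by
    rintro ⟨x1, y1⟩ ⟨x2, y2⟩ ⟨t1, ht1, ht2⟩ ⟨t2, hs1, hs2⟩
    simp only [Set.mem_setOf_eq] at *
    refine ⟨t1 * t2 * a, ?_, ?_⟩
    · show x1 * x2 = _; rw [ht1, hs1]; ring
    · show (c : ℤ) ∣ y1 * y2 - _
      have key : y1 * y2 - t1 * t2 * a * b =
          (y1 - t1 * b) * y2 + (t1 * b) * (y2 - t2 * b) + t1 * t2 * (b * (b - a)) := by ring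
      rw [key]
      exact dvd_add (dvd_add (ht2.mul_right _) (hs2.mul_left _)) (hcond.mul_left _)

theorem mem_lat {a c : ℕ} {b : ℤ} {h} {z : ℤ × ℤ} :
    z ∈ lat a c b h ↔ ∃ t : ℤ, z.1 = t * a ∧ (c : ℤ) ∣ z.2 - t * b := Iff.rfl

theorem lat_index (a c : ℕ) (ha : 0 < a) (hc : 0 < c) (b : ℤ) (h) :
    (lat a c b h).toAddSubgroup.index = a * c := by
  haveI : NeZero a := ⟨ha.ne'⟩
  haveI : NeZero c := ⟨hc.ne'⟩
  set L := (lat a c b h).toAddSubgroup with hL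
  have memL : ∀ z : ℤ × ℤ, z ∈ L ↔ ∃ t : ℤ, z.1 = t * a ∧ (c : ℤ) ∣ z.2 - t * b := fun z => Iff.rfl
  set F : ZMod a × ZMod c → (ℤ × ℤ) ⧸ L := fun uv =>
    QuotientAddGroup.mk ((uv.1.val : ℤ), (uv.2.val : ℤ)) with hF
  have hinj : Function.Injective F := by
    rintro ⟨u, v⟩ ⟨u', v'⟩ huv
    rw [hF] at huv
    simp only at huv
    rw [QuotientAddGroup.eq] at huv
    obtain ⟨t, ht1, ht2⟩ := (memL _).1 huv
    simp only [Prod.fst_add, Prod.fst_neg, Prod.snd_add, Prod.snd_neg] at ht1 ht2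
    have hua : (u.val : ℤ) < a := by exact_mod_cast ZMod.val_lt u
    have hua' : (u'.val : ℤ) < a := by exact_mod_cast ZMod.val_lt u'
    have hvc : (v.val : ℤ) < c := by exact_mod_cast ZMod.val_lt v
    have hvc' : (v'.val : ℤ) < c := by exact_mod_cast ZMod.val_lt v'
    have hu0 : (0 : ℤ) ≤ u.val := Int.natCast_nonneg _
    have hu0' : (0 : ℤ) ≤ u'.val := Int.natCast_nonneg _
    have hv0 : (0 : ℤ) ≤ v.val := Int.natCast_nonneg _
    have hv0' : (0 : ℤ) ≤ v'.val := Int.natCast_nonneg _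
    have h1 : (a : ℤ) ∣ ((u'.val : ℤ) - u.val) := ⟨t, by linarith⟩
    have h2 : ((u'.val : ℤ) - u.val) = 0 :=
      Int.eq_zero_of_abs_lt_dvd h1 (abs_lt.2 ⟨by linarith, by linarith⟩)
    have ht0 : t = 0 := by
      have : t * (a : ℤ) = 0 := by linarith
      rcases mul_eq_zero.1 this with h' | h'
      · exact h'
      · exact absurd h' (by positivity)
    have h3 : (c : ℤ) ∣ ((v'.val : ℤ) - v.val) := by
      have := ht2; rw [ht0] at this; simp only [zero_mul, sub_zero] at this
      rw [sub_eq_neg_add]; exact this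
    have h4 : ((v'.val : ℤ) - v.val) = 0 :=
      Int.eq_zero_of_abs_lt_dvd h3 (abs_lt.2 ⟨by linarith, by linarith⟩)
    have hu : u = u' := ZMod.val_injective a (by omega)
    have hv : v = v' := ZMod.val_injective c (by omega)
    rw [hu, hv]
  have hsurj : Function.Surjective F := by
    intro q
    obtain ⟨⟨x, y⟩, rfl⟩ := QuotientAddGroup.mk_surjective q
    set t : ℤ := x / a with htdef
    refine ⟨((x : ZMod a), ((y - t * b : ℤ) : ZMod c)), ?_⟩
    rw [hF]
    simp only
    rw [QuotientAddGroup.eq]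
    refine (memL _).2 ⟨t, ?_, ?_⟩
    · show -(((x : ZMod a).val : ℤ)) + x = t * a
      have : (((x : ZMod a).val : ℤ)) = x % a := ZMod.val_intCast x
      rw [this]
      rw [Int.emod_def]
      ring
    · show (c : ℤ) ∣ -(((((y - t * b : ℤ)) : ZMod c).val : ℤ)) + y - t * b
      have : (((((y - t * b : ℤ)) : ZMod c).val : ℤ)) = (y - t * b) % c := ZMod.val_intCast _
      rw [this, Int.emod_def]
      exact ⟨(y - t * b) / c, by ring⟩
  have : Nat.card ((ℤ × ℤ) ⧸ L) = Nat.card (ZMod a × ZMod c) :=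
    Nat.card_congr (Equiv.ofBijective F ⟨hinj, hsurj⟩).symm
  rw [AddSubgroup.index_eq_card, this, Nat.card_prod, Nat.card_zmod, Nat.card_zmod]



/-- p-adic valuation as factorization of natAbs -/
theorem pow_dvd_int_iff {p : ℕ} (hp : p.Prime) {z : ℤ} (hz : z ≠ 0) (k : ℕ) :
    (p : ℤ) ^ k ∣ z ↔ k ≤ z.natAbs.factorization p := by
  rw [show ((p : ℤ) ^ k) = ((p ^ k : ℕ) : ℤ) by push_cast; ring, Int.natCast_dvd,
    ← Nat.Prime.pow_dvd_iff_le_factorization hp (Int.natAbs_ne_zero.2 hz)]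

/-- case j ≤ 2i : p^j ∣ z(z-p^i) ↔ p^(j - j/2) ∣ z -/
theorem quad_dvd_iff_le {p : ℕ} (hp : p.Prime) {i j : ℕ} (hij : j ≤ 2 * i) (z : ℤ) :
    (p : ℤ) ^ j ∣ z * (z - (p : ℤ) ^ i) ↔ (p : ℤ) ^ (j - j / 2) ∣ z := by
  have hp1 : 1 < p := hp.one_lt
  have hpz : (p : ℤ) ≠ 0 := by exact_mod_cast hp.pos.ne'
  set h := j - j / 2 with hh
  set l := j / 2 with hl
  have hhl : l + h = j := by omega
  have hhi : h ≤ i := by omega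
  have hli : l ≤ i := by omega
  have hlh : l ≤ h := by omega
  constructor
  · intro hdvd
    rcases eq_or_ne z 0 with rfl | hz0
    · exact dvd_zero _
    rcases eq_or_ne z ((p : ℤ) ^ i) with rfl | hzi
    · exact pow_dvd_pow (p : ℤ) hhi
    have hz2 : z - (p : ℤ) ^ i ≠ 0 := sub_ne_zero.2 hzi
    set v := z.natAbs.factorization p with hv
    set w := (z - (p : ℤ) ^ i).natAbs.factorization p with hw
    have hvw : j ≤ v + w := by
      have hne : z * (z - (p : ℤ) ^ i) ≠ 0 := mul_ne_zero hz0 hz2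
      have := (pow_dvd_int_iff hp hne j).1 hdvd
      rwa [Int.natAbs_mul, Nat.factorization_mul (Int.natAbs_ne_zero.2 hz0)
        (Int.natAbs_ne_zero.2 hz2), Finsupp.add_apply] at this
    rw [pow_dvd_int_iff hp hz0]
    by_contra hcon
    push_neg at hcon
    -- v < h, so w ≤ v
    have hwv : w ≤ v := by
      by_contra hcon2
      push_neg at hcon2
      have h1 : (p : ℤ) ^ (v + 1) ∣ z - (p : ℤ) ^ i := (pow_dvd_int_iff hp hz2 _).2 hcon2
      have h2 : (p : ℤ) ^ (v + 1) ∣ (p : ℤ) ^ i := pow_dvd_pow _ (by omega)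
      have h3 : (p : ℤ) ^ (v + 1) ∣ z := by
        have := dvd_add h1 h2
        simpa using this
      have := (pow_dvd_int_iff hp hz0 _).1 h3
      omega
    omega
  · intro hdvd
    obtain ⟨w, hwz⟩ := hdvd
    have : z * (z - (p : ℤ) ^ i) = (p : ℤ) ^ j * (w * ((p:ℤ)^(h-l) * w - (p : ℤ) ^ (i - l))) := by
      rw [hwz, ← hhl]
      rw [show (p:ℤ)^(l+h) = (p:ℤ)^l * (p:ℤ)^h by rw [pow_add],
        show (p:ℤ)^i = (p:ℤ)^l * (p:ℤ)^(i-l) by rw [← pow_add]; congr 1; omega,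
        show (p:ℤ)^h = (p:ℤ)^l * (p:ℤ)^(h-l) by rw [← pow_add]; congr 1; omega]
      ring
    exact ⟨_, this⟩

/-- case 2i < j -/
theorem quad_dvd_iff_gt {p : ℕ} (hp : p.Prime) {i j : ℕ} (hij : 2 * i < j) (z : ℤ) :
    (p : ℤ) ^ j ∣ z * (z - (p : ℤ) ^ i) ↔
      ((p : ℤ) ^ (j - i) ∣ z ∨ (p : ℤ) ^ (j - i) ∣ z - (p : ℤ) ^ i) := by
  have hp1 : 1 < p := hp.one_lt
  constructor
  · intro hdvd
    rcases eq_or_ne z 0 with rfl | hz0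
    · exact Or.inl (dvd_zero _)
    rcases eq_or_ne z ((p : ℤ) ^ i) with rfl | hzi
    · exact Or.inr (by simp)
    have hz2 : z - (p : ℤ) ^ i ≠ 0 := sub_ne_zero.2 hzi
    set v := z.natAbs.factorization p with hv
    set w := (z - (p : ℤ) ^ i).natAbs.factorization p with hw
    have hvw : j ≤ v + w := by
      have hne : z * (z - (p : ℤ) ^ i) ≠ 0 := mul_ne_zero hz0 hz2
      have := (pow_dvd_int_iff hp hne j).1 hdvd
      rwa [Int.natAbs_mul, Nat.factorization_mul (Int.natAbs_ne_zero.2 hz0)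
        (Int.natAbs_ne_zero.2 hz2), Finsupp.add_apply] at this
    by_contra hcon
    push_neg at hcon
    obtain ⟨hc1, hc2⟩ := hcon
    rw [pow_dvd_int_iff hp hz0] at hc1
    rw [pow_dvd_int_iff hp hz2] at hc2
    push_neg at hc1 hc2
    -- min v w ≤ i
    have hmin : min v w ≤ i := by
      have h1 : (p : ℤ) ^ (min v w) ∣ z := (pow_dvd_int_iff hp hz0 _).2 (by omega)
      have h2 : (p : ℤ) ^ (min v w) ∣ z - (p : ℤ) ^ i := (pow_dvd_int_iff hp hz2 _).2 (by omega)
      have h3 : (p : ℤ) ^ (min v w) ∣ (p : ℤ) ^ i := by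
        have := dvd_sub h1 h2
        simpa using this
      have h4 : (p ^ (min v w) : ℕ) ∣ p ^ i := by exact_mod_cast h3
      exact (Nat.pow_dvd_pow_iff_le_right hp1).1 h4
    omega
  · rintro (hdvd | hdvd)
    · have h2 : (p : ℤ) ^ i ∣ z - (p : ℤ) ^ i :=
        dvd_sub ((pow_dvd_pow _ (by omega)).trans hdvd) dvd_rfl
      have := mul_dvd_mul hdvd h2
      rwa [← pow_add, Nat.sub_add_cancel (by omega)] at this
    · have h2 : (p : ℤ) ^ i ∣ z := by
        have : z = (z - (p : ℤ) ^ i) + (p : ℤ) ^ i := by ring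
        rw [this]
        exact dvd_add ((pow_dvd_pow _ (by omega)).trans hdvd) dvd_rfl
      have := mul_dvd_mul h2 hdvd
      rwa [← pow_add, Nat.add_sub_cancel' (by omega : i ≤ j)] at this

/-- counting multiples of d congruent to r in [0, d*k) -/
theorem card_congruent (d k r : ℕ) (hr : r < d) :
    ((range (d * k)).filter fun b : ℕ => (d : ℤ) ∣ (b : ℤ) - (r : ℤ)).card = k := by
  have hd : 0 < d := lt_of_le_of_lt (Nat.zero_le r) hr
  have himg : (range (d * k)).filter (fun b : ℕ => (d : ℤ) ∣ (b : ℤ) - (r : ℤ)) =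
      (range k).image (fun t => r + d * t) := by
    ext b
    simp only [mem_filter, mem_range, mem_image]
    constructor
    · rintro ⟨hb, m, hm⟩
      have hm0 : 0 ≤ m := by nlinarith [hm, (by exact_mod_cast hr : (r:ℤ) < d)]
      refine ⟨m.toNat, ?_, ?_⟩
      · by_contra hcon
        push_neg at hcon
        have : (d : ℤ) * k ≤ d * m := by
          have : (k : ℤ) ≤ m := by
            have := Int.toNat_of_nonneg hm0
            omega
          exact mul_le_mul_of_nonneg_left this (by positivity)
        have hbk : (b : ℤ) < d * k := by exact_mod_cast hb
        omega
      · have : (b : ℤ) = r + d * m.toNat := by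
          rw [Int.toNat_of_nonneg hm0]; omega
        exact_mod_cast this.symm
    · rintro ⟨t, ht, rfl⟩
      constructor
      · calc r + d * t < d + d * t := by omega
          _ = d * (t + 1) := by ring
          _ ≤ d * k := Nat.mul_le_mul_left d (by omega)
      · exact ⟨t, by push_cast; ring⟩
  rw [himg, Finset.card_image_of_injective _ (fun x y hxy => Nat.eq_of_mul_eq_mul_left hd (by omega)), Finset.card_range]




def gcount (p i j : ℕ) : ℕ := if j ≤ 2 * i then p ^ (j / 2) else 2 * p ^ i

theorem card_g {p : ℕ} (hp : p.Prime) (i j : ℕ) :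
    ((range (p ^ j)).filter fun b : ℕ =>
      ((p ^ j : ℕ) : ℤ) ∣ (b : ℤ) * ((b : ℤ) - ((p ^ i : ℕ) : ℤ))).card = gcount p i j := by
  have hp1 : 1 < p := hp.one_lt
  by_cases hij : j ≤ 2 * i
  · rw [gcount, if_pos hij]
    have hiff : ∀ b ∈ range (p ^ j),
        (((p ^ j : ℕ) : ℤ) ∣ (b : ℤ) * ((b : ℤ) - ((p ^ i : ℕ) : ℤ))) ↔
        ((p ^ (j - j / 2) : ℕ) : ℤ) ∣ (b : ℤ) - ((0 : ℕ) : ℤ) := by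
      intro b _
      push_cast
      rw [sub_zero]
      exact quad_dvd_iff_le hp hij (b : ℤ)
    rw [filter_congr hiff]
    have hsplit : p ^ j = p ^ (j - j / 2) * p ^ (j / 2) := by
      rw [← pow_add]; congr 1; omega
    rw [hsplit]
    exact card_congruent _ _ 0 (by positivity)
  · push_neg at hij
    rw [gcount, if_neg (by omega)]
    have hiff : ∀ b ∈ range (p ^ j),
        (((p ^ j : ℕ) : ℤ) ∣ (b : ℤ) * ((b : ℤ) - ((p ^ i : ℕ) : ℤ))) ↔
        ((((p ^ (j - i) : ℕ) : ℤ) ∣ (b : ℤ) - ((0 : ℕ) : ℤ)) ∨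
         (((p ^ (j - i) : ℕ) : ℤ) ∣ (b : ℤ) - ((p ^ i : ℕ) : ℤ))) := by
      intro b _
      push_cast
      rw [sub_zero]
      exact quad_dvd_iff_gt hp hij (b : ℤ)
    rw [filter_congr hiff, filter_or]
    have hd : p ^ i < p ^ (j - i) := Nat.pow_lt_pow_right hp1 (by omega)
    have hdisj : Disjoint
        ((range (p ^ j)).filter fun b : ℕ => ((p ^ (j - i) : ℕ) : ℤ) ∣ (b : ℤ) - ((0 : ℕ) : ℤ))
        ((range (p ^ j)).filter fun b : ℕ => ((p ^ (j - i) : ℕ) : ℤ) ∣ (b : ℤ) - ((p ^ i : ℕ) : ℤ)) := by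
      rw [Finset.disjoint_left]
      intro b hb1 hb2
      rw [mem_filter] at hb1 hb2
      have h1 := hb1.2
      have h2 := hb2.2
      have h3 : ((p ^ (j - i) : ℕ) : ℤ) ∣ ((p ^ i : ℕ) : ℤ) := by
        have := dvd_sub h1 h2
        simpa using this
      have h4 : p ^ (j - i) ∣ p ^ i := by exact_mod_cast h3
      exact absurd (Nat.le_of_dvd (by positivity) h4) (by omega)
    rw [card_union_of_disjoint hdisj]
    have hsplit : p ^ j = p ^ (j - i) * p ^ i := by rw [← pow_add]; congr 1; omega
    rw [hsplit, card_congruent _ _ 0 (by positivity), card_congruent _ _ (p ^ i) hd]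
    ring



def bcount (p N : ℕ) : ℕ := ∑ j ∈ range (N + 1), gcount p (N - j) j

theorem bcount_zero (p : ℕ) : bcount p 0 = 1 := by simp [bcount, gcount]

theorem bcount_one (p : ℕ) : bcount p 1 = 3 := by
  rw [bcount, sum_range_succ, sum_range_succ, sum_range_zero]
  simp [gcount]

theorem bcount_two (p : ℕ) : bcount p 2 = 4 := by
  rw [bcount, sum_range_succ, sum_range_succ, sum_range_succ, sum_range_zero]
  simp [gcount]

theorem gcount_shift (p i j : ℕ) : gcount p (i + 1) (j + 2) = p * gcount p i j := by
  rw [gcount, gcount]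
  by_cases h : j ≤ 2 * i
  · rw [if_pos (by omega), if_pos h]
    have : (j + 2) / 2 = j / 2 + 1 := by omega
    rw [this, pow_succ]
    ring
  · rw [if_neg (by omega), if_neg h, pow_succ]
    ring

theorem bcount_rec (p N : ℕ) : bcount p (N + 3) = 4 + p * bcount p N := by
  have h1 : bcount p (N + 3) = ∑ j ∈ range (N + 4), gcount p (N + 3 - j) j := rfl
  rw [h1, sum_range_succ, sum_range_succ', sum_range_succ']
  have h2 : ∀ j ∈ range (N + 1), gcount p (N + 3 - (j + 1 + 1)) (j + 1 + 1) =
      p * gcount p (N - j) j := by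
    intro j hj
    rw [mem_range] at hj
    have : N + 3 - (j + 1 + 1) = (N - j) + 1 := by omega
    rw [this]
    exact gcount_shift p (N - j) j
  rw [sum_congr rfl h2, ← mul_sum]
  have hg0 : gcount p (N + 3 - 0) 0 = 1 := by simp [gcount]
  have hg1 : gcount p (N + 3 - (0 + 1)) (0 + 1) = 1 := by
    rw [gcount, if_pos (by omega)]; norm_num
  have hgtop : gcount p (N + 3 - (N + 3)) (N + 3) = 2 := by
    rw [gcount, if_neg (by omega)]
    simp
  rw [hg0, hg1, hgtop]
  rw [bcount]
  ring




theorem classify (p N : ℕ) (hp : p.Prime) (H : NonUnitalSubring (ℤ × ℤ))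
    (hH : H.toAddSubgroup.index = p ^ N) :
    ∃ (j bn : ℕ) (_ : j ≤ N) (_ : bn < p ^ j)
      (hdvd : ((p ^ j : ℕ) : ℤ) ∣ (bn : ℤ) * ((bn : ℤ) - ((p ^ (N - j) : ℕ) : ℤ))),
      H = lat (p ^ (N - j)) (p ^ j) (bn : ℤ) hdvd := by
  have hp1 : 1 < p := hp.one_lt
  -- finiteness
  have hfin : Finite ((ℤ × ℤ) ⧸ H.toAddSubgroup) := by
    have h0 : Nat.card ((ℤ × ℤ) ⧸ H.toAddSubgroup) ≠ 0 := by
      rw [← AddSubgroup.index_eq_card, hH]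
      positivity
    exact (Nat.card_ne_zero.mp h0).2
  have key : ∀ z : ℤ × ℤ, ∃ n : ℕ, 0 < n ∧ n • z ∈ H.toAddSubgroup := by
    intro z
    have hord : IsOfFinAddOrder (QuotientAddGroup.mk (s := H.toAddSubgroup) z) :=
      isOfFinAddOrder_of_finite _
    obtain ⟨n, hn, hzn⟩ := isOfFinAddOrder_iff_nsmul_eq_zero.1 hord
    refine ⟨n, hn, ?_⟩
    rw [← QuotientAddGroup.eq_zero_iff]
    calc (QuotientAddGroup.mk (s := H.toAddSubgroup) (n • z))
        = n • (QuotientAddGroup.mk (s := H.toAddSubgroup) z) := by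
          exact (QuotientAddGroup.mk' H.toAddSubgroup).map_nsmul n z
      _ = 0 := hzn
  -- first-coordinate subgroup
  obtain ⟨g, hg⟩ := Int.subgroup_cyclic (H.toAddSubgroup.map (AddMonoidHom.fst ℤ ℤ))
  have hS1 : ∀ x : ℤ, (∃ y : ℤ, (x, y) ∈ H) ↔ g ∣ x := by
    intro x
    rw [← Int.mem_zmultiples_iff, AddSubgroup.zmultiples_eq_closure, ← hg]
    constructor
    · rintro ⟨y, hy⟩
      exact ⟨(x, y), hy, rfl⟩
    · rintro ⟨z, hz, hz1⟩
      exact ⟨z.2, by rwa [show z = (x, z.2) from Prod.ext hz1 rfl] at hz⟩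
  -- second-coordinate subgroup
  obtain ⟨g2, hg2⟩ := Int.subgroup_cyclic (H.toAddSubgroup.comap (AddMonoidHom.inr ℤ ℤ))
  have hS2 : ∀ y : ℤ, ((0, y) ∈ H ↔ g2 ∣ y) := by
    intro y
    rw [← Int.mem_zmultiples_iff, AddSubgroup.zmultiples_eq_closure, ← hg2]
    exact Iff.rfl
  set a : ℕ := g.natAbs with hadef
  set c : ℕ := g2.natAbs with hcdef
  -- positivity
  have ha : 0 < a := by
    obtain ⟨n, hn, hmem⟩ := key (1, 0)
    have h1 : ((n : ℤ), (0 : ℤ)) ∈ H := by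
      have : n • ((1 : ℤ), (0 : ℤ)) = ((n : ℤ), (0 : ℤ)) := by
        simp [Prod.smul_mk]
      rwa [this] at hmem
    have : g ∣ (n : ℤ) := (hS1 _).1 ⟨0, h1⟩
    have : g ≠ 0 := by
      rintro rfl
      rw [zero_dvd_iff] at this
      exact_mod_cast absurd this (by positivity)
    simpa [hadef, Int.natAbs_pos] using this
  have hc : 0 < c := by
    obtain ⟨n, hn, hmem⟩ := key (0, 1)
    have h1 : ((0 : ℤ), (n : ℤ)) ∈ H := by
      have : n • ((0 : ℤ), (1 : ℤ)) = ((0 : ℤ), (n : ℤ)) := by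
        simp [Prod.smul_mk]
      rwa [this] at hmem
    have : g2 ∣ (n : ℤ) := (hS2 _).1 h1
    have : g2 ≠ 0 := by
      rintro rfl
      rw [zero_dvd_iff] at this
      exact_mod_cast absurd this (by positivity)
    simpa [hcdef, Int.natAbs_pos] using this
  have hdvd_a : ∀ x : ℤ, ((a : ℤ) ∣ x ↔ g ∣ x) := fun x => Int.natAbs_dvd
  have hdvd_c : ∀ x : ℤ, ((c : ℤ) ∣ x ↔ g2 ∣ x) := fun x => Int.natAbs_dvd
  have hcH : ((0 : ℤ), (c : ℤ)) ∈ H := (hS2 _).2 ((hdvd_c _).1 dvd_rfl)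
  -- choose b
  obtain ⟨y0, hy0⟩ := (hS1 (a : ℤ)).2 ((hdvd_a _).1 dvd_rfl)
  set b : ℤ := y0 % c with hbdef
  have hbH : ((a : ℤ), b) ∈ H := by
    have heq : ((a : ℤ), b) = ((a : ℤ), y0) - (y0 / c) • ((0 : ℤ), (c : ℤ)) := by
      rw [Prod.smul_mk]
      have : b = y0 - (y0 / c) * c := by rw [hbdef, Int.emod_def]; ring
      simp [Prod.ext_iff, this, zsmul_eq_mul]
    rw [heq]
    exact sub_mem hy0 (zsmul_mem hcH _)
  have hb0 : 0 ≤ b := Int.emod_nonneg _ (by exact_mod_cast hc.ne')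
  have hbc : b < c := Int.emod_lt_of_pos _ (by exact_mod_cast hc)
  -- characterization of H
  have hch : ∀ z : ℤ × ℤ, z ∈ H ↔ ∃ t : ℤ, z.1 = t * a ∧ (c : ℤ) ∣ z.2 - t * b := by
    intro z
    constructor
    · intro hz
      have h1 : g ∣ z.1 := (hS1 z.1).1 ⟨z.2, by rwa [show (z.1, z.2) = z from rfl]⟩
      obtain ⟨t, ht⟩ := (hdvd_a z.1).2 h1
      refine ⟨t, by rw [ht]; ring, ?_⟩
      have h2 : z - t • ((a : ℤ), b) ∈ H := sub_mem hz (zsmul_mem hbH _)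
      have h3 : z - t • ((a : ℤ), b) = ((0 : ℤ), z.2 - t * b) := by
        have h1 : t • ((a : ℤ), b) = (t * a, t * b) := by
          simp [Prod.smul_mk, zsmul_eq_mul, Int.cast_id]
        rw [h1, Prod.ext_iff]
        refine ⟨?_, rfl⟩
        show z.1 - t * a = 0
        rw [ht]; ring
      rw [h3] at h2
      exact (hdvd_c _).2 ((hS2 _).1 h2)
    · rintro ⟨t, ht1, ht2⟩
      obtain ⟨s, hs⟩ := ht2
      have h1 : t • ((a : ℤ), b) = (t * a, t * b) := by
        simp [Prod.smul_mk, zsmul_eq_mul, Int.cast_id]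
      have h2 : s • ((0 : ℤ), (c : ℤ)) = ((0 : ℤ), s * c) := by
        simp [Prod.smul_mk, zsmul_eq_mul, Int.cast_id]
      have heq : z = t • ((a : ℤ), b) + s • ((0 : ℤ), (c : ℤ)) := by
        rw [h1, h2, Prod.mk_add_mk, Prod.ext_iff]
        refine ⟨by rw [ht1]; ring, ?_⟩
        show z.2 = t * b + s * c
        have : z.2 - t * b = c * s := hs
        linarith [this]
      rw [heq]
      exact add_mem (zsmul_mem hbH _) (zsmul_mem hcH _)
  -- multiplicative condition
  have hcond : (c : ℤ) ∣ b * (b - (a : ℤ)) := by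
    have hmul : ((a : ℤ), b) * ((a : ℤ), b) ∈ H := mul_mem hbH hbH
    have : ((a : ℤ) * a, b * b) ∈ H := by rwa [show ((a:ℤ), b) * ((a:ℤ), b) = ((a:ℤ)*a, b*b) from rfl] at hmul
    obtain ⟨t, ht1, ht2⟩ := (hch _).1 this
    have hta : t = a := by
      have ha0 : (a : ℤ) ≠ 0 := by exact_mod_cast ha.ne'
      have h' : t * (a : ℤ) = (a : ℤ) * (a : ℤ) := by
        have := ht1
        simp only at this
        linarith [this]
      exact mul_right_cancel₀ ha0 (by linarith [h'])
    rw [hta] at ht2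
    have : b * b - (a : ℤ) * b = b * (b - a) := by ring
    rwa [← this]
  have hHlat : H = lat a c b hcond := by
    apply NonUnitalSubring.ext
    intro z
    rw [hch z, mem_lat]
  -- index gives powers
  have hac : a * c = p ^ N := by
    rw [hHlat] at hH
    rw [lat_index a c ha hc b hcond] at hH
    exact hH
  have hcdvd : c ∣ p ^ N := Dvd.intro_left a hac
  obtain ⟨j, hj, hcj⟩ := (Nat.dvd_prime_pow hp).1 hcdvd
  have haj : a = p ^ (N - j) := by
    have h1 : a * p ^ j = p ^ (N - j) * p ^ j := by
      rw [← pow_add, Nat.sub_add_cancel hj, ← hcj, hac]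
    exact Nat.eq_of_mul_eq_mul_right (by positivity) h1
  set bn : ℕ := b.toNat with hbndef
  have hbnb : (bn : ℤ) = b := Int.toNat_of_nonneg hb0
  have hbnlt : bn < p ^ j := by
    have : (bn : ℤ) < ((p ^ j : ℕ) : ℤ) := by rw [hbnb, ← hcj]; exact_mod_cast hbc
    exact_mod_cast this
  have hdvd2 : ((p ^ j : ℕ) : ℤ) ∣ (bn : ℤ) * ((bn : ℤ) - ((p ^ (N - j) : ℕ) : ℤ)) := by
    rw [hbnb, ← haj, ← hcj]
    exact hcond
  refine ⟨j, bn, hj, hbnlt, hdvd2, ?_⟩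
  rw [hHlat]
  congr 1 <;> simp [haj, hcj, ← hbnb]





def latS (p N : ℕ) : Finset (Σ _ : ℕ, ℕ) :=
  (range (N + 1)).sigma fun j => (range (p ^ j)).filter fun b : ℕ =>
    ((p ^ j : ℕ) : ℤ) ∣ (b : ℤ) * ((b : ℤ) - ((p ^ (N - j) : ℕ) : ℤ))

theorem card_latS {p : ℕ} (hp : p.Prime) (N : ℕ) : (latS p N).card = bcount p N := by
  rw [latS, card_sigma]
  exact sum_congr rfl fun j _ => card_g hp (N - j) j

theorem mem_latS {p N : ℕ} {x : Σ _ : ℕ, ℕ} :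
    x ∈ latS p N ↔ x.1 ≤ N ∧ x.2 < p ^ x.1 ∧
      ((p ^ x.1 : ℕ) : ℤ) ∣ (x.2 : ℤ) * ((x.2 : ℤ) - ((p ^ (N - x.1) : ℕ) : ℤ)) := by
  obtain ⟨j, b⟩ := x
  simp only [latS, mem_sigma, mem_filter, mem_range, Nat.lt_succ_iff]
  try tauto


theorem count_eq (p N : ℕ) (hp : p.Prime) : zxzSubringCount p N = bcount p N := by
  have hp1 : 1 < p := hp.one_lt
  set T := {H : NonUnitalSubring (ℤ × ℤ) // H.toAddSubgroup.index = p ^ N} with hT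
  have hdvd : ∀ x : {x : Σ _ : ℕ, ℕ // x ∈ latS p N},
      ((p ^ x.1.1 : ℕ) : ℤ) ∣ (x.1.2 : ℤ) * ((x.1.2 : ℤ) - ((p ^ (N - x.1.1) : ℕ) : ℤ)) :=
    fun x => (mem_latS.1 x.2).2.2
  have hidx : ∀ x : {x : Σ _ : ℕ, ℕ // x ∈ latS p N},
      (lat (p ^ (N - x.1.1)) (p ^ x.1.1) (x.1.2 : ℤ) (hdvd x)).toAddSubgroup.index = p ^ N := by
    intro x
    rw [lat_index _ _ (by positivity) (by positivity), ← pow_add,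
      Nat.sub_add_cancel (mem_latS.1 x.2).1]
  set Φ : {x : Σ _ : ℕ, ℕ // x ∈ latS p N} → T :=
    fun x => ⟨lat (p ^ (N - x.1.1)) (p ^ x.1.1) (x.1.2 : ℤ) (hdvd x), hidx x⟩ with hΦ
  have hinj : Function.Injective Φ := by
    rintro ⟨⟨jx, bx⟩, hx⟩ ⟨⟨jy, b2⟩, hy⟩ hxy
    have hxy' := congrArg Subtype.val hxy
    simp only [hΦ] at hxy'
    obtain ⟨hjx, hbx, hdx⟩ := mem_latS.1 hx
    obtain ⟨hjy, hby, hdy⟩ := mem_latS.1 hy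
    dsimp only at hjx hbx hdx hjy hby hdy hxy'
    -- first coordinates
    have hmemy : (((p ^ (N - jy) : ℕ) : ℤ), (b2 : ℤ)) ∈
        lat (p ^ (N - jx)) (p ^ jx) (bx : ℤ) hdx := by
      rw [hxy']
      exact mem_lat.2 ⟨1, by simp, by simp⟩
    have hmemx : (((p ^ (N - jx) : ℕ) : ℤ), (bx : ℤ)) ∈
        lat (p ^ (N - jy)) (p ^ jy) (b2 : ℤ) hdy := by
      rw [← hxy']
      exact mem_lat.2 ⟨1, by simp, by simp⟩
    obtain ⟨t, ht1, -⟩ := mem_lat.1 hmemy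
    obtain ⟨s, hs1, -⟩ := mem_lat.1 hmemx
    have hd1 : (p ^ (N - jx) : ℕ) ∣ (p ^ (N - jy) : ℕ) := by
      have : ((p ^ (N - jx) : ℕ) : ℤ) ∣ ((p ^ (N - jy) : ℕ) : ℤ) := Dvd.intro_left t ht1.symm
      exact_mod_cast this
    have hd2 : (p ^ (N - jy) : ℕ) ∣ (p ^ (N - jx) : ℕ) := by
      have : ((p ^ (N - jy) : ℕ) : ℤ) ∣ ((p ^ (N - jx) : ℕ) : ℤ) := Dvd.intro_left s hs1.symm
      exact_mod_cast this
    have hij : N - jx = N - jy := by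
      have h1 := (Nat.pow_dvd_pow_iff_le_right hp1).1 hd1
      have h2 := (Nat.pow_dvd_pow_iff_le_right hp1).1 hd2
      omega
    have hj : jx = jy := by omega
    subst hj
    -- second coordinates
    have hmem2 := hmemy
    obtain ⟨t2, ht21, ht22⟩ := mem_lat.1 hmem2
    have ht2one : t2 = 1 := by
      have hne : ((p ^ (N - jx) : ℕ) : ℤ) ≠ 0 := by positivity
      have : t2 * ((p ^ (N - jx) : ℕ) : ℤ) = 1 * ((p ^ (N - jx) : ℕ) : ℤ) := by
        rw [one_mul, ← ht21]
      exact mul_right_cancel₀ hne this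
    rw [ht2one, one_mul] at ht22
    have hbb : (b2 : ℤ) = (bx : ℤ) := by
      have h0 : (b2 : ℤ) - bx = 0 := by
        refine Int.eq_zero_of_abs_lt_dvd ht22 ?_
        have h1 : (bx : ℤ) < ((p ^ jx : ℕ) : ℤ) := by exact_mod_cast hbx
        have h2 : (b2 : ℤ) < ((p ^ jx : ℕ) : ℤ) := by exact_mod_cast hby
        rw [abs_lt]
        constructor <;> [linarith [Int.natCast_nonneg b2]; linarith [Int.natCast_nonneg bx]]
      omega
    have : b2 = bx := by exact_mod_cast hbb
    subst this
    rfl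
  have hsurj : Function.Surjective Φ := by
    rintro ⟨H, hH⟩
    obtain ⟨j, bn, hj, hblt, hdvd2, hHeq⟩ := classify p N hp H hH
    refine ⟨⟨⟨j, bn⟩, mem_latS.2 ⟨hj, hblt, hdvd2⟩⟩, ?_⟩
    exact Subtype.ext hHeq.symm
  have : Nat.card T = Nat.card {x : Σ _ : ℕ, ℕ // x ∈ latS p N} :=
    Nat.card_congr (Equiv.ofBijective Φ ⟨hinj, hsurj⟩).symm
  rw [zxzSubringCount, ← hT, this, Nat.card_eq_fintype_card, Fintype.card_coe, card_latS hp]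




theorem ps_mul_one_sub (a : ℤ) (k : ℕ) (f : ℕ → ℤ) :
    (1 - (C a) * X ^ k) * PowerSeries.mk f =
      PowerSeries.mk fun n => f n - if k ≤ n then a * f (n - k) else 0 := by
  ext n
  rw [sub_mul, one_mul, map_sub, coeff_mk, coeff_mk]
  congr 1
  rw [show (C a) * X ^ k * PowerSeries.mk f = (C a * PowerSeries.mk f) * X ^ k by ring,
    coeff_mul_X_pow']
  split
  · rw [coeff_C_mul, coeff_mk]
  · rfl

theorem main_ps (p : ℕ) (hcount : ℕ → ℤ) (hc : ∀ N, hcount N = (bcount p N : ℤ)) :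
    (1 - X) * (1 - C (p : ℤ) * X ^ 3) * PowerSeries.mk hcount = (1 + X) ^ 2 := by
  have hmk : PowerSeries.mk hcount = PowerSeries.mk (fun N => (bcount p N : ℤ)) := by
    ext n; rw [coeff_mk, coeff_mk, hc]
  rw [hmk, mul_assoc, ps_mul_one_sub]
  set f2 : ℕ → ℤ := fun n => (bcount p n : ℤ) - if 3 ≤ n then (p : ℤ) * (bcount p (n - 3) : ℤ) else 0 with hf2
  have hf2val : ∀ n, f2 n = if n = 0 then 1 else if n = 1 then 3 else 4 := by
    intro n
    match n with
    | 0 => simp [hf2, bcount_zero]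
    | 1 => simp [hf2, bcount_one]
    | 2 => simp [hf2, bcount_two]
    | (n + 3) =>
      rw [hf2]
      simp only [if_neg (by omega : ¬(n+3) = 0), if_neg (by omega : ¬(n+3) = 1),
        if_pos (by omega : 3 ≤ n + 3)]
      rw [bcount_rec]
      push_cast [Nat.add_sub_cancel]
      ring
  rw [show (1 - X : ℤ⟦X⟧) = 1 - (C 1) * X ^ 1 by simp, ps_mul_one_sub]
  ext n
  rw [coeff_mk]
  have hrhs : ((1 + X : ℤ⟦X⟧) ^ 2) = 1 + (X + X) + X ^ 2 := by ring
  rw [hrhs, map_add, map_add, map_add, coeff_one, coeff_X, coeff_X_pow]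
  match n with
  | 0 => simp [hf2val]
  | 1 => simp [hf2val]
  | 2 => simp [hf2val]
  | (n + 3) =>
    simp only [if_neg (by omega : ¬(n + 3) = 0), if_neg (by omega : ¬(n + 3) = 1),
      if_neg (by omega : ¬(n + 3) = 2), if_pos (by omega : 1 ≤ n + 3)]
    rw [hf2val, hf2val]
    simp only [if_neg (by omega : ¬(n+3) = 0), if_neg (by omega : ¬(n+3) = 1),
      if_neg (by omega : ¬(n + 3 - 1) = 0), if_neg (by omega : ¬(n + 3 - 1) = 1)]
    ring

end ZxZCount

/-- For the ring `R = ℤ × ℤ` with componentwise operations and any prime `p`, the generating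
function `∑_N b_{p^N} X^N` counting subrings of `R` of additive index `p^N` satisfies, in
`ℤ⟦X⟧`, `(1 - X)(1 - pX³) · ∑_N b_{p^N} X^N = (1 + X)²`, i.e.
`ζ_{R,p}(s) = (1+p^{-s})²/((1-p^{-s})(1-p^{1-3s}))`. -/
theorem zxz_local_zeta_function (p : ℕ) (hp : p.Prime) :
    (1 - X) * (1 - C (p : ℤ) * X ^ 3) *
        PowerSeries.mk (fun N => (zxzSubringCount p N : ℤ)) =
      (1 + X) ^ 2 :=
  ZxZCount.main_ps p _ (fun N => by rw [ZxZCount.count_eq p N hp])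
end
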